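/- arXiv:2204.00058 — 6 statements merged into one kernel-verified Lean document; each statement's English description precedes it below -/
import Mathlib

section
/- Let 1 ≤ p2 ≤ ∞ and let p be defined by 1/p = 1/2 + 1/p2. Then there is no finite constant C such that the weak-type bound ‖S²(f,g)‖_{L^{p,∞}(ℝ)} ≤ C ‖f‖_{L^2(ℝ)} ‖g‖_{L^{p2}(ℝ)} holds for all f ∈ L^2(ℝ) and g ∈ L^{p2}(ℝ). -/
open MeasureTheory Real Set
open scoped ENNReal NNReal

/-- The bilinear spherical maximal function in dimension one:
`S²(f,g)(x) = sup_{t>0} (2π)⁻¹ ∫_0^{2π} |f(x - t cos θ)| |g(x - t sin θ)| dθ`. -/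
noncomputable def S2 (f g : ℝ → ℝ) (x : ℝ) : ℝ≥0∞ :=
  ⨆ (t : ℝ) (_ : 0 < t),
    (ENNReal.ofReal (2 * π))⁻¹ *
      ∫⁻ θ in Set.Ioc (0 : ℝ) (2 * π),
        ENNReal.ofReal (|f (x - t * Real.cos θ)| * |g (x - t * Real.sin θ)|)

/-- The normalized surface measure on the unit sphere `S^{m-1} ⊆ ℝ^m`. -/
noncomputable def sphMeasure (m : ℕ) :
    Measure (Metric.sphere (0 : EuclideanSpace ℝ (Fin m)) 1) :=
  ((volume : Measure (EuclideanSpace ℝ (Fin m))).toSphere Set.univ)⁻¹ •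
    (volume : Measure (EuclideanSpace ℝ (Fin m))).toSphere

/-- The multilinear spherical average
`S^m_t(|f₁|,…,|f_m|)(x) = ∫_{S^{m-1}} ∏ |f_i(x - t y_i)| dσ_{m-1}(y)`. -/
noncomputable def sphAvg (m : ℕ) (f : Fin m → ℝ → ℝ) (t x : ℝ) : ℝ≥0∞ :=
  ∫⁻ y : Metric.sphere (0 : EuclideanSpace ℝ (Fin m)) 1,
    ∏ i, ENNReal.ofReal |f i (x - t * (y : EuclideanSpace ℝ (Fin m)) i)| ∂(sphMeasure m)

/-- The multilinear spherical maximal function `S^m(f₁,…,f_m)(x) = sup_{t>0} S^m_t(|f₁|,…,|f_m|)(x)`. -/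
noncomputable def Sm (m : ℕ) (f : Fin m → ℝ → ℝ) (x : ℝ) : ℝ≥0∞ :=
  ⨆ (t : ℝ) (_ : 0 < t), sphAvg m f t x

/-- The `L^p(ℝ)` norm of an `ℝ≥0∞`-valued function. -/
noncomputable def lpNorm (p : ℝ≥0∞) (F : ℝ → ℝ≥0∞) : ℝ≥0∞ :=
  if p = ∞ then essSup F volume
  else (∫⁻ x, F x ^ p.toReal) ^ (1 / p.toReal)

/-- The weak `L^{p,∞}(ℝ)` quasinorm of an `ℝ≥0∞`-valued function. -/
noncomputable def wLpNorm (p : ℝ≥0∞) (F : ℝ → ℝ≥0∞) : ℝ≥0∞ :=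
  ⨆ (l : ℝ≥0∞) (_ : 0 < l), l * (volume {x | l < F x}) ^ (1 / p.toReal)

/-- The `k`-linear Hardy–Littlewood maximal function
`M^k(g₁,…,g_k)(x) = sup_{t>0} ∫_{B^k(0,1)} ∏ |g_i(x - t y_i)| dy`. -/
noncomputable def Mk (k : ℕ) (g : Fin k → ℝ → ℝ) (x : ℝ) : ℝ≥0∞ :=
  ⨆ (t : ℝ) (_ : 0 < t),
    ∫⁻ y in Metric.ball (0 : EuclideanSpace ℝ (Fin k)) 1,
      ∏ i, ENNReal.ofReal |g i (x - t * y i)| ∂volume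

noncomputable def fCE : ℝ → ℝ := fun y =>
  if y ∈ Set.Ioo (0:ℝ) 1 then (Real.sqrt y * (1 - Real.log y))⁻¹ else 0

noncomputable def gCE : ℝ → ℝ := (Set.Ioo (0:ℝ) 1).indicator (fun _ => (1:ℝ))

lemma gCE_mem (q : ℝ≥0∞) : MemLp gCE q volume := by
  apply memLp_indicator_const q measurableSet_Ioo 1 (Or.inr ?_)
  simp [Real.volume_Ioo]

lemma fCE_meas : Measurable fCE := by
  apply Measurable.ite measurableSet_Ioo ?_ measurable_const
  exact ((Real.continuous_sqrt.measurable).mul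
    (measurable_const.sub Real.measurable_log)).inv

lemma hasDerivAt_F {y : ℝ} (hy : 0 < y) (hy1 : y ≤ 1) :
    HasDerivAt (fun z => (1 - Real.log z)⁻¹) ((y * (1 - Real.log y)^2)⁻¹) y := by
  have hlog : Real.log y ≤ 0 := Real.log_nonpos hy.le hy1
  have h1 : 1 - Real.log y ≠ 0 := by nlinarith
  have hd : HasDerivAt (fun z => 1 - Real.log z) (-y⁻¹) y := by
    simpa using ((Real.hasDerivAt_log hy.ne').const_sub 1)
  have := hd.inv h1
  refine this.congr_deriv ?_
  field_simp

lemma lint_seg_le {a : ℝ} (ha : 0 < a) (ha1 : a < 1) :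
    ∫⁻ y in Set.Ioo a 1, ENNReal.ofReal ((y * (1 - Real.log y)^2)⁻¹) ≤ 1 := by
  set h : ℝ → ℝ := fun y => (y * (1 - Real.log y)^2)⁻¹ with hh
  have hpos : ∀ y ∈ Set.Icc a 1, 0 < y := fun y hy => lt_of_lt_of_le ha hy.1
  have hne : ∀ y ∈ Set.Icc a 1, y * (1 - Real.log y)^2 ≠ 0 := by
    intro y hy
    have h0 := hpos y hy
    have hlog : Real.log y ≤ 0 := Real.log_nonpos h0.le hy.2
    have h1 : (0:ℝ) < 1 - Real.log y := by linarith
    positivity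
  have hcont : ContinuousOn h (Set.Icc a 1) := by
    apply ContinuousOn.inv₀ ?_ hne
    exact (continuousOn_id.mul
      ((continuousOn_const.sub (Real.continuousOn_log.mono (by
        intro y hy; exact (hpos y hy).ne'))).pow 2))
  have hint : IntegrableOn h (Set.Ioo a 1) volume :=
    (hcont.integrableOn_compact isCompact_Icc).mono_set Set.Ioo_subset_Icc_self
  have hnn : 0 ≤ᵐ[volume.restrict (Set.Ioo a 1)] h := by
    refine (ae_restrict_iff' measurableSet_Ioo).2 (Filter.Eventually.of_forall ?_)
    intro y hy
    have h0 : (0:ℝ) < y := ha.trans hy.1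
    positivity
  have key : ∫⁻ y in Set.Ioo a 1, ENNReal.ofReal (h y) =
      ENNReal.ofReal (∫ y in Set.Ioo a 1, h y) :=
    (ofReal_integral_eq_lintegral_ofReal hint hnn).symm
  rw [key]
  have hfc : ∫ y in Set.Ioo a 1, h y = (1 - Real.log 1)⁻¹ - (1 - Real.log a)⁻¹ := by
    rw [← MeasureTheory.integral_Ioc_eq_integral_Ioo,
      ← intervalIntegral.integral_of_le ha1.le]
    apply intervalIntegral.integral_eq_sub_of_hasDerivAt (f := fun z => (1 - Real.log z)⁻¹) (f' := h)
    · intro y hy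
      rw [Set.uIcc_of_le ha1.le] at hy
      exact hasDerivAt_F (hpos y hy) hy.2
    · rw [intervalIntegrable_iff_integrableOn_Ioo_of_le ha1.le]
      exact hint
  rw [hfc]
  have hloga : (0:ℝ) ≤ (1 - Real.log a)⁻¹ := by
    have h2 : Real.log a ≤ 0 := Real.log_nonpos ha.le ha1.le
    have h3 : (0:ℝ) < 1 - Real.log a := by linarith
    positivity
  have : (1 - Real.log 1)⁻¹ - (1 - Real.log a)⁻¹ ≤ 1 := by
    simp only [Real.log_one, sub_zero, inv_one]
    linarith
  exact le_trans (ENNReal.ofReal_le_ofReal this) (le_of_eq ENNReal.ofReal_one)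

lemma lint_full_le :
    ∫⁻ y in Set.Ioo (0:ℝ) 1, ENNReal.ofReal ((y * (1 - Real.log y)^2)⁻¹) ≤ 1 := by
  set F : ℝ → ℝ≥0∞ := fun y => ENNReal.ofReal ((y * (1 - Real.log y)^2)⁻¹) with hF
  have hFmeas : Measurable F :=
    (((measurable_id.mul ((measurable_const.sub Real.measurable_log).pow_const 2)).inv)).ennreal_ofReal
  have hsub : ∀ n : ℕ, Set.Ioo (1/(n+1:ℝ)) 1 ⊆ Set.Ioo (0:ℝ) 1 := by
    intro n y hy
    exact ⟨lt_trans (by positivity) hy.1, hy.2⟩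
  have hptw : ∀ y, (Set.Ioo (0:ℝ) 1).indicator F y
      = ⨆ n : ℕ, (Set.Ioo (1/(n+1:ℝ)) 1).indicator F y := by
    intro y
    by_cases hy : y ∈ Set.Ioo (0:ℝ) 1
    · rw [Set.indicator_of_mem hy]
      obtain ⟨n, hn⟩ := exists_nat_one_div_lt hy.1
      refine le_antisymm ?_ (iSup_le fun n => ?_)
      · exact le_iSup_of_le n
          (le_of_eq (Set.indicator_of_mem (Set.mem_Ioo.mpr ⟨hn, hy.2⟩) F).symm)
      · by_cases hmem : y ∈ Set.Ioo (1/(n+1:ℝ)) 1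
        · rw [Set.indicator_of_mem hmem]
        · rw [Set.indicator_of_notMem hmem]; exact zero_le
    · rw [Set.indicator_of_notMem hy]
      refine le_antisymm zero_le (iSup_le fun n => ?_)
      rw [Set.indicator_of_notMem (fun hmem => hy (hsub n hmem))]
  have hmono : Monotone (fun n : ℕ => fun y => (Set.Ioo (1/(n+1:ℝ)) 1).indicator F y) := by
    intro m n hmn
    apply Set.indicator_le_indicator_of_subset ?_ (fun y => zero_le)
    apply Set.Ioo_subset_Ioo ?_ le_rfl
    apply one_div_le_one_div_of_le (by positivity)
    have : (m:ℝ) ≤ n := Nat.cast_le.2 hmn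
    linarith
  calc ∫⁻ y in Set.Ioo (0:ℝ) 1, F y
      = ∫⁻ y, (Set.Ioo (0:ℝ) 1).indicator F y := by
        rw [lintegral_indicator measurableSet_Ioo]
    _ = ∫⁻ y, ⨆ n : ℕ, (Set.Ioo (1/(n+1:ℝ)) 1).indicator F y := by
        simp_rw [hptw]
    _ = ⨆ n : ℕ, ∫⁻ y, (Set.Ioo (1/(n+1:ℝ)) 1).indicator F y := by
        rw [lintegral_iSup (fun n => hFmeas.indicator measurableSet_Ioo) hmono]
    _ ≤ 1 := by
        refine iSup_le fun n => ?_
        rw [lintegral_indicator measurableSet_Ioo]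
        rcases lt_or_ge (1/(n+1:ℝ)) 1 with h | h
        · exact lint_seg_le (by positivity) h
        · rw [Set.Ioo_eq_empty (not_lt.2 h)]
          simp

lemma fCE_mem : MemLp fCE 2 volume := by
  refine ⟨fCE_meas.aestronglyMeasurable, ?_⟩
  rw [eLpNorm_eq_lintegral_rpow_enorm_toReal (by norm_num) (by norm_num)]
  have h2 : ((2:ℝ≥0∞)).toReal = 2 := by norm_num
  rw [h2]
  have hb : ∫⁻ y, ‖fCE y‖ₑ ^ (2:ℝ) ≤ 1 := by
    have hle : ∀ y, ‖fCE y‖ₑ ^ (2:ℝ) ≤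
        (Set.Ioo (0:ℝ) 1).indicator
          (fun y => ENNReal.ofReal ((y * (1 - Real.log y)^2)⁻¹)) y := by
      intro y
      by_cases hy : y ∈ Set.Ioo (0:ℝ) 1
      · rw [Set.indicator_of_mem hy]
        have h0 : (0:ℝ) < y := hy.1
        have hlog : Real.log y ≤ 0 := Real.log_nonpos h0.le hy.2.le
        have h1 : (0:ℝ) < 1 - Real.log y := by linarith
        have hr : (0:ℝ) ≤ (Real.sqrt y * (1 - Real.log y))⁻¹ := by positivity
        have : fCE y = (Real.sqrt y * (1 - Real.log y))⁻¹ := if_pos hy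
        rw [this, Real.enorm_eq_ofReal hr,
          ENNReal.ofReal_rpow_of_nonneg hr (by norm_num : (0:ℝ) ≤ 2)]
        apply le_of_eq
        congr 1
        rw [Real.rpow_two, inv_pow, mul_pow, Real.sq_sqrt h0.le]
      · have : fCE y = 0 := if_neg hy
        rw [this, Set.indicator_of_notMem hy]
        simp [ENNReal.zero_rpow_of_pos]
    calc ∫⁻ y, ‖fCE y‖ₑ ^ (2:ℝ)
        ≤ ∫⁻ y, (Set.Ioo (0:ℝ) 1).indicator
            (fun y => ENNReal.ofReal ((y * (1 - Real.log y)^2)⁻¹)) y := lintegral_mono hle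
      _ = ∫⁻ y in Set.Ioo (0:ℝ) 1, ENNReal.ofReal ((y * (1 - Real.log y)^2)⁻¹) := by
          rw [lintegral_indicator measurableSet_Ioo]
      _ ≤ 1 := lint_full_le
  have := ENNReal.rpow_le_rpow hb (by norm_num : (0:ℝ) ≤ 1/2)
  rw [ENNReal.one_rpow] at this
  exact lt_of_le_of_lt this ENNReal.one_lt_top

lemma hasDerivAt_negG {θ : ℝ} (h0 : 0 < θ) (h1 : θ < 1) :
    HasDerivAt (fun z => -Real.log (1 - Real.log z)) ((θ * (1 - Real.log θ))⁻¹) θ := by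
  have hlog : Real.log θ < 0 := Real.log_neg h0 h1
  have hne : 1 - Real.log θ ≠ 0 := by nlinarith
  have hd : HasDerivAt (fun z => 1 - Real.log z) (-θ⁻¹) θ := by
    simpa using ((Real.hasDerivAt_log h0.ne').const_sub 1)
  have := (hd.log hne).neg
  refine this.congr_deriv ?_
  field_simp

lemma J_top :
    ∫⁻ θ in Set.Ioo (0:ℝ) 1, ENNReal.ofReal ((θ * (1 - Real.log θ))⁻¹) = ⊤ := by
  by_contra hJ
  set J := ∫⁻ θ in Set.Ioo (0:ℝ) 1, ENNReal.ofReal ((θ * (1 - Real.log θ))⁻¹) with hJdef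
  set φ : ℝ → ℝ := fun θ => (θ * (1 - Real.log θ))⁻¹ with hφ
  set Gh : ℝ := Real.log (1 - Real.log (1/2 : ℝ)) with hGh
  set S : ℝ := max (J.toReal + Gh + 1) 2 with hS
  set a : ℝ := Real.exp (1 - Real.exp S) with ha
  have ha0 : 0 < a := Real.exp_pos _
  have hexpS : (3:ℝ) ≤ Real.exp S := by
    have h1 : (2:ℝ) + 1 ≤ Real.exp 2 := Real.add_one_le_exp 2
    have h2 : Real.exp 2 ≤ Real.exp S := Real.exp_le_exp.2 (le_max_right _ _)
    linarith
  have ha12 : a < 1/2 := by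
    rw [ha, ← Real.exp_log (by norm_num : (0:ℝ) < 1/2)]
    apply Real.exp_lt_exp.2
    have : Real.log (1/2) = -Real.log 2 := by
      rw [one_div, Real.log_inv]
    have hlog2 : Real.log 2 < 1 := by
      have := Real.log_lt_sub_one_of_pos (by norm_num : (0:ℝ) < 2) (by norm_num)
      linarith
    linarith
  have hGa : Real.log (1 - Real.log a) = S := by
    rw [ha, Real.log_exp]
    ring_nf
    rw [Real.log_exp]
  -- FTC on [a, 1/2]
  have hderiv : ∀ θ ∈ Set.uIcc a (1/2 : ℝ),
      HasDerivAt (fun z => -Real.log (1 - Real.log z)) (φ θ) θ := by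
    intro θ hθ
    rw [Set.uIcc_of_le ha12.le] at hθ
    exact hasDerivAt_negG (lt_of_lt_of_le ha0 hθ.1) (lt_of_le_of_lt hθ.2 (by norm_num))
  have hcont : ContinuousOn φ (Set.Icc a (1/2 : ℝ)) := by
    apply ContinuousOn.inv₀
    · exact continuousOn_id.mul (continuousOn_const.sub
        (Real.continuousOn_log.mono (fun θ hθ => (lt_of_lt_of_le ha0 hθ.1).ne')))
    · intro θ hθ
      have h0 : 0 < θ := lt_of_lt_of_le ha0 hθ.1
      have h1 : θ < 1 := lt_of_le_of_lt hθ.2 (by norm_num)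
      have hlog : Real.log θ < 0 := Real.log_neg h0 h1
      have h2 : 0 < 1 - Real.log θ := by linarith
      exact (mul_pos h0 h2).ne'
  have hii : IntervalIntegrable φ volume a (1/2 : ℝ) := by
    apply ContinuousOn.intervalIntegrable
    rwa [Set.uIcc_of_le ha12.le]
  have hftc : ∫ θ in a..(1/2 : ℝ), φ θ = Real.log (1 - Real.log a) - Gh := by
    rw [intervalIntegral.integral_eq_sub_of_hasDerivAt hderiv hii, hGh]
    ring
  -- compare with J
  have hIoc : Set.Ioc a (1/2 : ℝ) ⊆ Set.Ioo (0:ℝ) 1 := fun θ hθ =>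
    ⟨lt_trans ha0 hθ.1, lt_of_le_of_lt hθ.2 (by norm_num)⟩
  have hintIoc : IntegrableOn φ (Set.Ioc a (1/2:ℝ)) volume :=
    (intervalIntegrable_iff_integrableOn_Ioc_of_le ha12.le).1 hii
  have hnn : 0 ≤ᵐ[volume.restrict (Set.Ioc a (1/2:ℝ))] φ := by
    refine (ae_restrict_iff' measurableSet_Ioc).2 (Filter.Eventually.of_forall ?_)
    intro θ hθ
    have h0 : 0 < θ := lt_trans ha0 hθ.1
    have h1 : θ < 1 := lt_of_le_of_lt hθ.2 (by norm_num)
    have hlog : Real.log θ < 0 := Real.log_neg h0 h1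
    have h2 : 0 < 1 - Real.log θ := by linarith
    exact le_of_lt (inv_pos.2 (mul_pos h0 h2))
  have hcmp : ENNReal.ofReal (∫ θ in Set.Ioc a (1/2:ℝ), φ θ) ≤ J := by
    rw [ofReal_integral_eq_lintegral_ofReal hintIoc hnn]
    exact lintegral_mono_set hIoc
  have heq : ∫ θ in Set.Ioc a (1/2:ℝ), φ θ = S - Gh := by
    rw [← intervalIntegral.integral_of_le ha12.le, hftc, hGa]
  rw [heq] at hcmp
  have hSG : J.toReal + 1 ≤ S - Gh := by
    have := le_max_left (J.toReal + Gh + 1) 2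
    have h2 := hS
    nlinarith [le_max_left (J.toReal + Gh + 1) 2]
  have hle : S - Gh ≤ J.toReal := by
    have h0 : (0:ℝ) ≤ S - Gh := by
      have : (0:ℝ) ≤ J.toReal := ENNReal.toReal_nonneg
      linarith
    exact (ENNReal.ofReal_le_iff_le_toReal hJ).1 hcmp
  have : (0:ℝ) ≤ J.toReal := ENNReal.toReal_nonneg
  linarith

lemma pointwise_lb {x θ : ℝ} (hx : x ∈ Set.Ioo (0:ℝ) 1) (hθ : θ ∈ Set.Ioo (0:ℝ) 1) :
    ENNReal.ofReal ((3 - Real.log (x * (2/π^2)))⁻¹ * (θ * (1 - Real.log θ))⁻¹) ≤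
      ENNReal.ofReal (|fCE (x - x * Real.cos θ)| * |gCE (x - x * Real.sin θ)|) := by
  obtain ⟨hx0, hx1⟩ := hx
  obtain ⟨hθ0, hθ1⟩ := hθ
  have hπ : (3:ℝ) < π := Real.pi_gt_three
  have hπ2 : (9:ℝ) < π^2 := by nlinarith
  set c : ℝ := x * (2/π^2) with hc
  have hc0 : 0 < c := by positivity
  have hc1 : c < 1 := by
    have h : 2/π^2 < 1 := by
      rw [div_lt_one (by positivity)]
      linarith
    rw [hc]
    nlinarith
  set u : ℝ := x - x * Real.cos θ with hu
  set v : ℝ := x - x * Real.sin θ with hv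
  -- bounds on u
  have hcosub : Real.cos θ ≤ 1 - 2/π^2 * θ^2 :=
    Real.cos_le_one_sub_mul_cos_sq (by rw [abs_of_pos hθ0]; linarith)
  have hu_lb : c * θ^2 ≤ u := by rw [hu, hc]; nlinarith
  have hcoslb : 1 - θ^2/2 ≤ Real.cos θ := Real.one_sub_sq_div_two_le_cos
  have hu_ub : u ≤ θ^2 := by rw [hu]; nlinarith
  have hu0 : 0 < u := lt_of_lt_of_le (by positivity) hu_lb
  have hu1 : u < 1 := lt_of_le_of_lt hu_ub (by nlinarith)
  -- v in (0,1)
  have hsin0 : 0 < Real.sin θ := Real.sin_pos_of_pos_of_lt_pi hθ0 (by linarith)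
  have hsin1 : Real.sin θ < 1 := lt_trans (Real.sin_lt hθ0) hθ1
  have hv0 : 0 < v := by rw [hv]; nlinarith
  have hv1 : v < 1 := by rw [hv]; nlinarith
  -- values of fCE, gCE
  have hfu : fCE u = (Real.sqrt u * (1 - Real.log u))⁻¹ := if_pos ⟨hu0, hu1⟩
  have hgv : gCE v = 1 := Set.indicator_of_mem (Set.mem_Ioo.mpr ⟨hv0, hv1⟩) _
  -- key real inequality
  have hlogu : Real.log u < 0 := Real.log_neg hu0 hu1
  have hlogθ : Real.log θ < 0 := Real.log_neg hθ0 hθ1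
  have hlogc : Real.log c < 0 := Real.log_neg hc0 hc1
  have hsqrtu : Real.sqrt u ≤ θ := by
    calc Real.sqrt u ≤ Real.sqrt (θ^2) := Real.sqrt_le_sqrt hu_ub
      _ = θ := Real.sqrt_sq hθ0.le
  have hloglb : Real.log c + 2 * Real.log θ ≤ Real.log u := by
    have h1 : Real.log (c * θ^2) ≤ Real.log u := Real.log_le_log (by positivity) hu_lb
    rw [Real.log_mul hc0.ne' (by positivity), Real.log_pow] at h1
    push_cast at h1
    linarith
  set K : ℝ := 3 - Real.log c with hK
  have hK3 : (3:ℝ) ≤ K := by rw [hK]; linarith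
  have hlog_ineq : 1 - Real.log u ≤ K * (1 - Real.log θ) := by
    rw [hK]
    nlinarith [mul_nonneg (neg_nonneg.2 hlogc.le) (neg_nonneg.2 hlogθ.le)]
  have hprod : Real.sqrt u * (1 - Real.log u) ≤ K * (θ * (1 - Real.log θ)) := by
    have h := mul_le_mul hsqrtu hlog_ineq (by linarith) hθ0.le
    calc Real.sqrt u * (1 - Real.log u) ≤ θ * (K * (1 - Real.log θ)) := h
      _ = K * (θ * (1 - Real.log θ)) := by ring
  have hlhs_pos : 0 < Real.sqrt u * (1 - Real.log u) := by
    have := Real.sqrt_pos.2 hu0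
    nlinarith
  have hinv : (K * (θ * (1 - Real.log θ)))⁻¹ ≤ (Real.sqrt u * (1 - Real.log u))⁻¹ :=
    inv_anti₀ hlhs_pos hprod
  apply ENNReal.ofReal_le_ofReal
  rw [hfu, hgv]
  rw [abs_one, mul_one, abs_of_nonneg (le_of_lt (inv_pos.2 hlhs_pos))]
  calc K⁻¹ * (θ * (1 - Real.log θ))⁻¹ = (K * (θ * (1 - Real.log θ)))⁻¹ := (mul_inv _ _).symm
    _ ≤ _ := hinv

lemma S2_top {x : ℝ} (hx : x ∈ Set.Ioo (0:ℝ) 1) : S2 fCE gCE x = ⊤ := by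
  have hπ : (3:ℝ) < π := Real.pi_gt_three
  set K : ℝ := 3 - Real.log (x * (2/π^2)) with hK
  have hK0 : 0 < K := by
    have hc0 : 0 < x * (2/π^2) := by
      have := hx.1; positivity
    have hc1 : x * (2/π^2) < 1 := by
      have h : 2/π^2 < 1 := by
        rw [div_lt_one (by positivity)]
        nlinarith
      nlinarith [hx.1, hx.2]
    have := Real.log_neg hc0 hc1
    rw [hK]; linarith
  have h1 : (⊤:ℝ≥0∞) = ∫⁻ θ in Set.Ioo (0:ℝ) 1,
      ENNReal.ofReal (K⁻¹ * (θ * (1 - Real.log θ))⁻¹) := by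
    have hKnn : (0:ℝ) ≤ K⁻¹ := le_of_lt (inv_pos.2 hK0)
    simp_rw [ENNReal.ofReal_mul hKnn]
    rw [lintegral_const_mul' _ _ ENNReal.ofReal_ne_top, J_top,
      ENNReal.mul_top (by simpa [ENNReal.ofReal_eq_zero] using inv_pos.2 hK0)]
  have h2 : (∫⁻ θ in Set.Ioo (0:ℝ) 1,
      ENNReal.ofReal (K⁻¹ * (θ * (1 - Real.log θ))⁻¹)) ≤
      ∫⁻ θ in Set.Ioo (0:ℝ) 1,
      ENNReal.ofReal (|fCE (x - x * Real.cos θ)| * |gCE (x - x * Real.sin θ)|) := by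
    refine setLIntegral_mono' measurableSet_Ioo ?_
    intro θ hθ
    exact pointwise_lb hx hθ
  have h3 : (∫⁻ θ in Set.Ioo (0:ℝ) 1,
      ENNReal.ofReal (|fCE (x - x * Real.cos θ)| * |gCE (x - x * Real.sin θ)|)) ≤
      ∫⁻ θ in Set.Ioc (0:ℝ) (2 * π),
      ENNReal.ofReal (|fCE (x - x * Real.cos θ)| * |gCE (x - x * Real.sin θ)|) := by
    apply lintegral_mono_set
    intro θ hθ
    exact ⟨hθ.1, by nlinarith [hθ.2, hπ]⟩
  have hI : (∫⁻ θ in Set.Ioc (0:ℝ) (2 * π),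
      ENNReal.ofReal (|fCE (x - x * Real.cos θ)| * |gCE (x - x * Real.sin θ)|)) = ⊤ :=
    eq_top_iff.2 (h1.le.trans (h2.trans h3))
  unfold S2
  rw [eq_top_iff]
  have hle := le_iSup₂ (f := fun (t : ℝ) (_ : 0 < t) =>
    (ENNReal.ofReal (2 * π))⁻¹ *
      ∫⁻ θ in Set.Ioc (0 : ℝ) (2 * π),
        ENNReal.ofReal (|fCE (x - t * Real.cos θ)| * |gCE (x - t * Real.sin θ)|)) x hx.1
  refine le_trans ?_ hle
  rw [hI, ENNReal.mul_top (ENNReal.inv_ne_zero.2 ENNReal.ofReal_ne_top)]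

lemma wLp_top (p : ℝ≥0∞) : wLpNorm p (S2 fCE gCE) = ⊤ := by
  have key : ∀ n : ℕ, (n : ℝ≥0∞) ≤ wLpNorm p (S2 fCE gCE) := by
    intro n
    rcases Nat.eq_zero_or_pos n with h0 | hpos
    · simp [h0]
    have hl : (0:ℝ≥0∞) < n := by exact_mod_cast hpos
    have hset : Set.Ioo (0:ℝ) 1 ⊆ {x | (n:ℝ≥0∞) < S2 fCE gCE x} := by
      intro x hx
      simp only [Set.mem_setOf_eq, S2_top hx]
      exact ENNReal.natCast_lt_top n
    have hvol : 1 ≤ volume {x | (n:ℝ≥0∞) < S2 fCE gCE x} := by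
      calc (1:ℝ≥0∞) = volume (Set.Ioo (0:ℝ) 1) := by simp [Real.volume_Ioo]
        _ ≤ _ := measure_mono hset
    have hrpow : 1 ≤ (volume {x | (n:ℝ≥0∞) < S2 fCE gCE x}) ^ (1/p.toReal) := by
      calc (1:ℝ≥0∞) = 1 ^ (1/p.toReal) := (ENNReal.one_rpow _).symm
        _ ≤ _ := ENNReal.rpow_le_rpow hvol (by positivity)
    unfold wLpNorm
    have hle := le_iSup₂ (f := fun (l:ℝ≥0∞) (_ : 0 < l) =>
      l * (volume {x | l < S2 fCE gCE x}) ^ (1/p.toReal)) (n:ℝ≥0∞) hl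
    refine le_trans ?_ hle
    calc (n:ℝ≥0∞) = n * 1 := (mul_one _).symm
      _ ≤ _ := mul_le_mul_right hrpow _
  by_contra h
  obtain ⟨n, hn⟩ := ENNReal.exists_nat_gt (h : wLpNorm p (S2 fCE gCE) ≠ ⊤)
  exact absurd (key n) (not_le.2 hn)

/-- For `1 ≤ p₂ ≤ ∞` and `1/p = 1/2 + 1/p₂`, there is no finite constant `C`
such that the weak-type bound `‖S²(f,g)‖_{L^{p,∞}} ≤ C ‖f‖_{L²} ‖g‖_{L^{p₂}}` holds. -/
theorem bilinear_spherical_maximal_no_weak_bound_at_two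
    (p₂ : ℝ≥0∞) (hp₂ : 1 ≤ p₂) (p : ℝ≥0∞) (hp : p⁻¹ = 2⁻¹ + p₂⁻¹) :
    ¬ ∃ C : ℝ, ∀ f g : ℝ → ℝ,
        MemLp f 2 volume → MemLp g p₂ volume →
        wLpNorm p (S2 f g) ≤
          ENNReal.ofReal C * eLpNorm f 2 volume * eLpNorm g p₂ volume := by
  rintro ⟨C, hC⟩
  have h := hC fCE gCE fCE_mem (gCE_mem p₂)
  rw [wLp_top p] at h
  have hlt : ENNReal.ofReal C * eLpNorm fCE 2 volume * eLpNorm gCE p₂ volume < ⊤ :=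
    ENNReal.mul_lt_top (ENNReal.mul_lt_top ENNReal.ofReal_lt_top fCE_mem.2) (gCE_mem p₂).2
  exact absurd (lt_of_le_of_lt h hlt) (lt_irrefl _)
end

section
/- Let g = χ_{[−10,10]} and let f(x) = |x|^{−1/2} (−log|x|)^{−1} χ_{[−1/2,1/2]}(x) (with f(0) = 0). Then f ∈ L^2(ℝ), and for every x with 1/4 ≤ x ≤ 1/2 one has S²(f,g)(x) = +∞. In particular S²(f,g) is infinite on a set of positive Lebesgue measure. -/
open MeasureTheory Real Set
open scoped ENNReal NNReal

open MeasureTheory Real Set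
open scoped ENNReal NNReal

noncomputable def phi : ℝ → ℝ := fun x => |x| ^ (-(1/2) : ℝ) * (-Real.log |x|)⁻¹

lemma phi_contOn {s : Set ℝ} (hs : ∀ x ∈ s, x ≠ 0 ∧ |x| < 1) : ContinuousOn phi s := by
  have habs : ContinuousOn (fun x : ℝ => |x|) s := continuous_abs.continuousOn
  have hlog : ContinuousOn (fun x : ℝ => Real.log |x|) s := by
    refine Real.continuousOn_log.comp habs (fun x hx => ?_)
    simp only [Set.mem_compl_iff, Set.mem_singleton_iff]
    exact abs_ne_zero.2 (hs x hx).1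
  apply ContinuousOn.mul
  · exact habs.rpow_const (fun x hx => Or.inl (abs_ne_zero.2 (hs x hx).1))
  · refine ContinuousOn.inv₀ hlog.neg (fun x hx => ?_)
    have h0 : 0 < |x| := abs_pos.2 (hs x hx).1
    exact ne_of_gt (neg_pos.2 (Real.log_neg h0 (hs x hx).2))

lemma integrableOn_phi_sq_pos :
    IntegrableOn (fun x => phi x ^ 2) (Set.Ioo (0:ℝ) (1/2)) volume := by
  have hcover : AECover (volume.restrict (Set.Ioo (0:ℝ) (1/2))) Filter.atTop
      (fun n : ℕ => Set.Icc ((n:ℝ)+3)⁻¹ (1/2)) := by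
    apply aecover_Ioo_of_Icc
    · exact tendsto_inv_atTop_zero.comp
        (Filter.tendsto_atTop_add_const_right _ 3 tendsto_natCast_atTop_atTop)
    · exact tendsto_const_nhds
  have han : ∀ n : ℕ, (0:ℝ) < ((n:ℝ)+3)⁻¹ := fun n => by positivity
  have han2 : ∀ n : ℕ, ((n:ℝ)+3)⁻¹ ≤ 1/2 := fun n => by
    rw [inv_le_comm₀ (by positivity) (by norm_num)]
    have : (0:ℝ) ≤ (n:ℝ) := Nat.cast_nonneg n
    linarith
  have hcond : ∀ n : ℕ, ∀ x ∈ Set.Icc ((n:ℝ)+3)⁻¹ (1/2), x ≠ 0 ∧ |x| < 1 := by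
    intro n x hx
    have h0 : 0 < x := lt_of_lt_of_le (han n) hx.1
    exact ⟨ne_of_gt h0, by rw [abs_of_pos h0]; linarith [hx.2]⟩
  refine hcover.integrable_of_integral_bounded_of_nonneg_ae ((Real.log 2)⁻¹)
    (fun n => ((phi_contOn (hcond n)).pow 2).integrableOn_compact isCompact_Icc)
    (Filter.Eventually.of_forall (fun x => sq_nonneg _)) ?_
  refine Filter.Eventually.of_forall (fun n => ?_)
  rw [Measure.restrict_restrict measurableSet_Icc]
  have hset : Set.Icc ((n:ℝ)+3)⁻¹ (1/2) ∩ Set.Ioo (0:ℝ) (1/2) = Set.Ico ((n:ℝ)+3)⁻¹ (1/2) := by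
    ext y
    simp only [Set.mem_inter_iff, Set.mem_Icc, Set.mem_Ioo, Set.mem_Ico]
    constructor
    · rintro ⟨⟨h1, h2⟩, h3, h4⟩; exact ⟨h1, h4⟩
    · rintro ⟨h1, h2⟩; exact ⟨⟨h1, h2.le⟩, lt_of_lt_of_le (han n) h1, h2⟩
  rw [hset, MeasureTheory.integral_Ico_eq_integral_Ioo, ← MeasureTheory.integral_Ioc_eq_integral_Ioo,
    ← intervalIntegral.integral_of_le (han2 n)]
  have hderiv : ∀ x ∈ Set.uIcc (((n:ℝ)+3)⁻¹) (1/2),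
      HasDerivAt (fun y => -(Real.log y)⁻¹) (phi x ^ 2) x := by
    rw [Set.uIcc_of_le (han2 n)]
    intro x hx
    have hx0 : 0 < x := lt_of_lt_of_le (han n) hx.1
    have hlogx : Real.log x < 0 := Real.log_neg hx0 (by linarith [hx.2])
    have d := ((Real.hasDerivAt_log hx0.ne').inv (ne_of_lt hlogx)).neg
    refine d.congr_deriv (Eq.symm ?_)
    unfold phi
    rw [abs_of_pos hx0, mul_pow]
    have hsq : (x ^ (-(1/2):ℝ))^2 = x⁻¹ := by
      rw [← Real.rpow_natCast (x ^ (-(1/2):ℝ)) 2, ← Real.rpow_mul hx0.le]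
      norm_num [Real.rpow_neg_one]
    rw [hsq]
    have hlogne := ne_of_lt hlogx
    field_simp
  have hInt : IntervalIntegrable (fun x => phi x ^ 2) volume (((n:ℝ)+3)⁻¹) (1/2) := by
    refine ContinuousOn.intervalIntegrable ?_
    rw [Set.uIcc_of_le (han2 n)]
    exact (phi_contOn (hcond n)).pow 2
  rw [intervalIntegral.integral_eq_sub_of_hasDerivAt hderiv hInt]
  have h1 : Real.log (1/2:ℝ) = -Real.log 2 := by
    rw [one_div, Real.log_inv]
  have hlogan : Real.log (((n:ℝ)+3)⁻¹) < 0 := Real.log_neg (han n) (by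
    have := han2 n; linarith)
  have h2 : (Real.log (((n:ℝ)+3)⁻¹))⁻¹ < 0 := inv_lt_zero.2 hlogan
  rw [h1, inv_neg]
  linarith

lemma integrableOn_phi_sq_neg :
    IntegrableOn (fun x => phi x ^ 2) (Set.Ioo (-(1/2):ℝ) 0) volume := by
  have hcover : AECover (volume.restrict (Set.Ioo (-(1/2):ℝ) 0)) Filter.atTop
      (fun n : ℕ => Set.Icc (-(1/2):ℝ) (-((n:ℝ)+3)⁻¹)) := by
    apply aecover_Ioo_of_Icc
    · exact tendsto_const_nhds
    · have : Filter.Tendsto (fun n : ℕ => ((n:ℝ)+3)⁻¹) Filter.atTop (nhds 0) :=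
        tendsto_inv_atTop_zero.comp
          (Filter.tendsto_atTop_add_const_right _ 3 tendsto_natCast_atTop_atTop)
      simpa using this.neg
  have han : ∀ n : ℕ, (0:ℝ) < ((n:ℝ)+3)⁻¹ := fun n => by positivity
  have han2 : ∀ n : ℕ, ((n:ℝ)+3)⁻¹ ≤ 1/2 := fun n => by
    rw [inv_le_comm₀ (by positivity) (by norm_num)]
    have : (0:ℝ) ≤ (n:ℝ) := Nat.cast_nonneg n
    linarith
  have hle : ∀ n : ℕ, (-(1/2):ℝ) ≤ -((n:ℝ)+3)⁻¹ := fun n => by linarith [han2 n]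
  have hcond : ∀ n : ℕ, ∀ x ∈ Set.Icc (-(1/2):ℝ) (-((n:ℝ)+3)⁻¹), x ≠ 0 ∧ |x| < 1 := by
    intro n x hx
    have h0 : x < 0 := lt_of_le_of_lt hx.2 (by linarith [han n])
    refine ⟨ne_of_lt h0, ?_⟩
    rw [abs_of_neg h0]
    linarith [hx.1]
  refine hcover.integrable_of_integral_bounded_of_nonneg_ae ((Real.log 2)⁻¹)
    (fun n => ((phi_contOn (hcond n)).pow 2).integrableOn_compact isCompact_Icc)
    (Filter.Eventually.of_forall (fun x => sq_nonneg _)) ?_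
  refine Filter.Eventually.of_forall (fun n => ?_)
  rw [Measure.restrict_restrict measurableSet_Icc]
  have hset : Set.Icc (-(1/2):ℝ) (-((n:ℝ)+3)⁻¹) ∩ Set.Ioo (-(1/2):ℝ) 0
      = Set.Ioc (-(1/2):ℝ) (-((n:ℝ)+3)⁻¹) := by
    ext y
    simp only [Set.mem_inter_iff, Set.mem_Icc, Set.mem_Ioo, Set.mem_Ioc]
    constructor
    · rintro ⟨⟨h1, h2⟩, h3, h4⟩; exact ⟨h3, h2⟩
    · rintro ⟨h1, h2⟩; exact ⟨⟨h1.le, h2⟩, h1, lt_of_le_of_lt h2 (by linarith [han n])⟩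
  rw [hset, ← intervalIntegral.integral_of_le (hle n)]
  have hderiv : ∀ x ∈ Set.uIcc (-(1/2):ℝ) (-((n:ℝ)+3)⁻¹),
      HasDerivAt (fun y => (Real.log y)⁻¹) (phi x ^ 2) x := by
    rw [Set.uIcc_of_le (hle n)]
    intro x hx
    have hx0 : x < 0 := lt_of_le_of_lt hx.2 (by linarith [han n])
    have habs : |x| = -x := abs_of_neg hx0
    have habs1 : |x| ≤ 1/2 := by rw [habs]; linarith [hx.1]
    have hlogx : Real.log x < 0 := by
      rw [← Real.log_abs]
      exact Real.log_neg (abs_pos.2 (ne_of_lt hx0)) (by linarith)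
    have d := (Real.hasDerivAt_log (ne_of_lt hx0)).inv (ne_of_lt hlogx)
    refine d.congr_deriv (Eq.symm ?_)
    unfold phi
    rw [Real.log_abs, habs, mul_pow]
    have hsq : ((-x) ^ (-(1/2):ℝ))^2 = (-x)⁻¹ := by
      rw [← Real.rpow_natCast ((-x) ^ (-(1/2):ℝ)) 2, ← Real.rpow_mul (by linarith)]
      norm_num [Real.rpow_neg_one]
    rw [hsq]
    have hlogne := ne_of_lt hlogx
    have hxne : x ≠ 0 := ne_of_lt hx0
    field_simp
  have hInt : IntervalIntegrable (fun x => phi x ^ 2) volume (-(1/2):ℝ) (-((n:ℝ)+3)⁻¹) := by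
    refine ContinuousOn.intervalIntegrable ?_
    rw [Set.uIcc_of_le (hle n)]
    exact (phi_contOn (hcond n)).pow 2
  rw [intervalIntegral.integral_eq_sub_of_hasDerivAt hderiv hInt]
  have h1 : Real.log (-(1/2:ℝ)) = -Real.log 2 := by
    rw [Real.log_neg_eq_log, one_div, Real.log_inv]
  have h2 : Real.log (-((n:ℝ)+3)⁻¹) = Real.log (((n:ℝ)+3)⁻¹) := Real.log_neg_eq_log _
  have hlogan : Real.log (((n:ℝ)+3)⁻¹) < 0 := Real.log_neg (han n) (by
    have := han2 n; linarith)
  have h3 : (Real.log (((n:ℝ)+3)⁻¹))⁻¹ < 0 := inv_lt_zero.2 hlogan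
  rw [h1, h2, inv_neg]
  linarith

noncomputable def gfun : ℝ → ℝ := Set.indicator (Set.Icc (-10 : ℝ) 10) 1

noncomputable def ffun : ℝ → ℝ := Set.indicator (Set.Icc (-(1/2) : ℝ) (1/2))
  (fun x => |x| ^ (-(1/2) : ℝ) * (-Real.log |x|)⁻¹)

lemma ffun_meas : Measurable ffun := by
  apply Measurable.indicator _ measurableSet_Icc
  measurability

lemma gfun_meas : Measurable gfun :=
  measurable_const.indicator measurableSet_Icc

-- pointwise lower bound
set_option maxHeartbeats 1000000 in
lemma pointwise_lb_s3 {x θ : ℝ} (hx1 : 1/4 ≤ x) (hx2 : x ≤ 1/2)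
    (hθ0 : 0 < θ) (hθ : θ ≤ 1/2) :
    (3 * (θ * (-Real.log θ)))⁻¹ ≤ |ffun (x - x * Real.cos θ)| * |gfun (x - x * Real.sin θ)| := by
  have hπ := Real.pi_gt_three
  have hxpos : (0:ℝ) < x := by linarith
  -- the g factor equals 1
  have hsin0 : 0 ≤ Real.sin θ := Real.sin_nonneg_of_nonneg_of_le_pi hθ0.le (by linarith)
  have hsin1 : Real.sin θ ≤ 1 := Real.sin_le_one θ
  have hg : gfun (x - x * Real.sin θ) = 1 := by
    have hmem : x - x * Real.sin θ ∈ Set.Icc (-10 : ℝ) 10 := by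
      constructor <;> nlinarith
    simp [gfun, Set.indicator_of_mem hmem]
  -- bounds on 1 - cos θ
  have hy0 : (0:ℝ) < θ/2 := by linarith
  have hy4 : θ/2 ≤ 1/4 := by linarith
  have hsh0 : 0 ≤ Real.sin (θ/2) := Real.sin_nonneg_of_nonneg_of_le_pi hy0.le (by linarith)
  have hsh_ub : Real.sin (θ/2) ≤ θ/2 := Real.sin_le hy0.le
  have hsh_lb : 3/4 * (θ/2) ≤ Real.sin (θ/2) := by
    have h := Real.sin_gt_sub_cube hy0
    nlinarith [sq_nonneg (θ/2)]
  have hcos_id : Real.cos θ = 1 - 2 * Real.sin (θ/2)^2 := by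
    have h1 := Real.sin_sq_add_cos_sq (θ/2)
    have h2 := Real.cos_two_mul' (θ/2)
    rw [show 2*(θ/2) = θ by ring] at h2
    linarith
  have hc_ub : 1 - Real.cos θ ≤ θ^2/2 := by nlinarith
  have hc_lb : θ^2/4 ≤ 1 - Real.cos θ := by nlinarith
  set u := x - x * Real.cos θ with hu
  have hu_eq : u = x * (1 - Real.cos θ) := by rw [hu]; ring
  have hu_lb : θ^2/16 ≤ u := by rw [hu_eq]; nlinarith
  have hu_ub : u ≤ θ^2/4 := by rw [hu_eq]; nlinarith
  have hu0 : 0 < u := lt_of_lt_of_le (by positivity) hu_lb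
  have hu_half : u ≤ 1/2 := by nlinarith
  have hu1 : u < 1 := by linarith
  have hf_eq : ffun u = u ^ (-(1/2) : ℝ) * (-Real.log u)⁻¹ := by
    have hmem : u ∈ Set.Icc (-(1/2) : ℝ) (1/2) := ⟨by linarith, hu_half⟩
    unfold ffun
    rw [Set.indicator_of_mem hmem, abs_of_pos hu0]
  have hlogθ : Real.log θ < 0 := Real.log_neg hθ0 (by linarith)
  have hlogu : Real.log u < 0 := Real.log_neg hu0 hu1
  -- first factor
  have h1 : 2/θ ≤ u ^ (-(1/2) : ℝ) := by
    have h := Real.rpow_le_rpow_of_nonpos hu0 hu_ub (by norm_num : (-(1/2):ℝ) ≤ 0)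
    have e : (θ^2/4 : ℝ) ^ (-(1/2) : ℝ) = 2/θ := by
      rw [show (θ^2/4 : ℝ) = (θ/2)^2 by ring, ← Real.rpow_natCast (θ/2) 2,
        ← Real.rpow_mul (by positivity)]
      norm_num [Real.rpow_neg_one]
    rw [e] at h
    exact h
  -- second factor
  have h2 : (6 * (-Real.log θ))⁻¹ ≤ (-Real.log u)⁻¹ := by
    have hloglb : Real.log (θ^2/16) ≤ Real.log u :=
      (Real.log_le_log_iff (by positivity) hu0).2 hu_lb
    have e1 : Real.log (θ^2/16) = 2 * Real.log θ - Real.log 16 := by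
      rw [Real.log_div (by positivity) (by norm_num), Real.log_pow]
      push_cast; ring
    have h16 : Real.log 16 = 4 * Real.log 2 := by
      rw [show (16:ℝ) = 2^4 by norm_num, Real.log_pow]; push_cast; ring
    have hlog2 : Real.log 2 ≤ -Real.log θ := by
      have h := (Real.log_le_log_iff hθ0 (by norm_num : (0:ℝ) < 1/2)).2 hθ
      rw [show (1/2 : ℝ) = 2⁻¹ by norm_num, Real.log_inv] at h
      linarith
    have hub : -Real.log u ≤ 6 * (-Real.log θ) := by linarith
    exact inv_anti₀ (by linarith) hub
  -- combine
  have hprod : (3 * (θ * (-Real.log θ)))⁻¹ ≤ u ^ (-(1/2):ℝ) * (-Real.log u)⁻¹ := by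
    have e : (3 * (θ * (-Real.log θ)))⁻¹ = (2/θ) * (6 * (-Real.log θ))⁻¹ := by
      rw [mul_inv, mul_inv, div_eq_mul_inv, show ((6:ℝ) * (-Real.log θ))⁻¹ = 6⁻¹ * (-Real.log θ)⁻¹ from mul_inv _ _]
      ring_nf
    rw [e]
    exact mul_le_mul h1 h2 (inv_nonneg.2 (by nlinarith)) (Real.rpow_nonneg hu0.le _)
  have hfnn : 0 ≤ u ^ (-(1/2):ℝ) * (-Real.log u)⁻¹ :=
    mul_nonneg (Real.rpow_nonneg hu0.le _) (inv_nonneg.2 (by linarith))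
  rw [hg, hf_eq, abs_of_nonneg hfnn, abs_one, mul_one]
  exact hprod

set_option maxHeartbeats 1000000 in
lemma lint_top {x : ℝ} (hx1 : 1/4 ≤ x) (hx2 : x ≤ 1/2) :
    ∫⁻ θ in Set.Ioc (0:ℝ) (2*π),
      ENNReal.ofReal (|ffun (x - x * Real.cos θ)| * |gfun (x - x * Real.sin θ)|) = ∞ := by
  set L := ∫⁻ θ in Set.Ioc (0:ℝ) (2*π),
      ENNReal.ofReal (|ffun (x - x * Real.cos θ)| * |gfun (x - x * Real.sin θ)|) with hL
  by_contra hLne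
  have key : ∀ n : ℕ, ENNReal.ofReal (((n:ℝ) - Real.log (Real.log 2))/3) ≤ L := by
    intro n
    set a := Real.exp (-Real.exp n) with ha
    have ha0 : 0 < a := Real.exp_pos _
    have hexp1 : (1:ℝ) ≤ Real.exp n := by
      rw [show (1:ℝ) = Real.exp 0 by simp]
      exact Real.exp_le_exp.2 (by positivity)
    have ha_half : a < 1/2 := by
      have h1 : a ≤ Real.exp (-1) := Real.exp_le_exp.2 (by linarith)
      have h2 : Real.exp (-1) < 1/2 := by
        rw [Real.exp_neg]
        rw [inv_lt_comm₀ (Real.exp_pos 1) (by norm_num)]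
        have := Real.exp_one_gt_d9
        norm_num at this ⊢
        linarith
      linarith
    have hab : a ≤ (1/2:ℝ) := ha_half.le
    set hfun : ℝ → ℝ := fun θ => (3 * (θ * (-Real.log θ)))⁻¹ with hhfun
    -- continuity of hfun on [a, 1/2]
    have hcont : ContinuousOn hfun (Set.Icc a (1/2)) := by
      apply ContinuousOn.inv₀
      · refine continuousOn_const.mul (continuousOn_id.mul (ContinuousOn.neg ?_))
        exact Real.continuousOn_log.mono (fun θ hθ => by
          simp only [Set.mem_compl_iff, Set.mem_singleton_iff]
          exact ne_of_gt (lt_of_lt_of_le ha0 hθ.1))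
      · intro θ hθ
        have hθ0 : 0 < θ := lt_of_lt_of_le ha0 hθ.1
        have hlog : Real.log θ < 0 := Real.log_neg hθ0 (by linarith [hθ.2])
        have : 0 < 3 * (θ * (-Real.log θ)) := by nlinarith
        exact ne_of_gt this
    have hInt : IntervalIntegrable hfun volume a (1/2) :=
      (hcont.mono (by rw [Set.uIcc_of_le hab])).intervalIntegrable
    -- FTC
    have hderiv : ∀ θ ∈ Set.uIcc a (1/2),
        HasDerivAt (fun y => -Real.log (-Real.log y) / 3) (hfun θ) θ := by
      intro θ hθ
      rw [Set.uIcc_of_le hab] at hθ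
      have hθ0 : 0 < θ := lt_of_lt_of_le ha0 hθ.1
      have hlog : Real.log θ < 0 := Real.log_neg hθ0 (by linarith [hθ.2])
      have d1 : HasDerivAt (fun y : ℝ => -Real.log y) (-θ⁻¹) θ :=
        (Real.hasDerivAt_log hθ0.ne').neg
      have d2 : HasDerivAt (fun y : ℝ => Real.log (-Real.log y))
          ((-Real.log θ)⁻¹ * -θ⁻¹) θ :=
        by have := (Real.hasDerivAt_log (ne_of_gt (neg_pos.2 hlog))).comp θ d1; exact this
      have d3 := (d2.neg).div_const 3
      refine d3.congr_deriv (Eq.symm ?_)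
      rw [hhfun]
      have hθne : θ ≠ 0 := ne_of_gt hθ0
      have hLne' : -Real.log θ ≠ 0 := ne_of_gt (neg_pos.2 hlog)
      field_simp
    have hFTC := intervalIntegral.integral_eq_sub_of_hasDerivAt hderiv hInt
    -- compute RHS
    have hval : (∫ θ in a..(1/2:ℝ), hfun θ) = ((n:ℝ) - Real.log (Real.log 2))/3 := by
      rw [hFTC, ha]
      rw [Real.log_exp, neg_neg, Real.log_exp]
      rw [show -Real.log (1/2 : ℝ) = Real.log 2 by
        rw [show (1/2:ℝ) = 2⁻¹ by norm_num, Real.log_inv]; ring]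
      ring
    -- relate to L
    have hIoc : IntegrableOn hfun (Set.Ioc a (1/2)) volume :=
      (intervalIntegrable_iff_integrableOn_Ioc_of_le hab).1 hInt
    have hnn : 0 ≤ᵐ[volume.restrict (Set.Ioc a (1/2))] hfun := by
      filter_upwards [ae_restrict_mem measurableSet_Ioc] with θ hθ
      have hθ0 : 0 < θ := lt_trans ha0 hθ.1
      have hlog : Real.log θ < 0 := Real.log_neg hθ0 (by linarith [hθ.2])
      rw [hhfun]
      exact inv_nonneg.2 (by nlinarith)
    calc ENNReal.ofReal (((n:ℝ) - Real.log (Real.log 2))/3)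
        = ENNReal.ofReal (∫ θ in Set.Ioc a (1/2), hfun θ) := by
          rw [← intervalIntegral.integral_of_le hab, hval]
      _ = ∫⁻ θ in Set.Ioc a (1/2), ENNReal.ofReal (hfun θ) :=
          ofReal_integral_eq_lintegral_ofReal hIoc hnn
      _ ≤ ∫⁻ θ in Set.Ioc a (1/2),
            ENNReal.ofReal (|ffun (x - x * Real.cos θ)| * |gfun (x - x * Real.sin θ)|) := by
          refine setLIntegral_mono' measurableSet_Ioc (fun θ hθ => ?_)
          exact ENNReal.ofReal_le_ofReal
            (pointwise_lb_s3 hx1 hx2 (lt_trans ha0 hθ.1) hθ.2)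
      _ ≤ L := by
          rw [hL]
          refine lintegral_mono_set (Set.Ioc_subset_Ioc ha0.le ?_)
          linarith [Real.pi_gt_three]
  -- contradiction
  have hbound : ∀ n : ℕ, ((n:ℝ) - Real.log (Real.log 2))/3 ≤ L.toReal := fun n =>
    (ENNReal.ofReal_le_iff_le_toReal hLne).1 (key n)
  obtain ⟨n, hn⟩ := exists_nat_gt (3 * L.toReal + Real.log (Real.log 2))
  have := hbound n
  linarith


lemma memL2 : MemLp ffun 2 volume := by
  rw [memLp_two_iff_integrable_sq ffun_meas.aestronglyMeasurable]
  have heq : (fun x => ffun x ^ 2)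
      = Set.indicator (Set.Icc (-(1/2):ℝ) (1/2)) (fun x => phi x ^ 2) := by
    funext x
    by_cases hx : x ∈ Set.Icc (-(1/2):ℝ) (1/2)
    · unfold ffun phi
      rw [Set.indicator_of_mem hx, Set.indicator_of_mem hx]
    · unfold ffun phi
      rw [Set.indicator_of_notMem hx, Set.indicator_of_notMem hx]
      norm_num
  rw [heq, integrable_indicator_iff measurableSet_Icc]
  rw [show (Set.Icc (-(1/2):ℝ) (1/2) : Set ℝ) = Set.Icc (-(1/2)) (1/2) from rfl]
  rw [IntegrableOn, Measure.restrict_congr_set Ioo_ae_eq_Icc.symm]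
  have hu : Set.Ioo (-(1/2):ℝ) (1/2) = Set.Ioo (-(1/2):ℝ) 0 ∪ Set.Ico (0:ℝ) (1/2) :=
    (Set.Ioo_union_Ico_eq_Ioo (by norm_num) (by norm_num)).symm
  rw [show (Integrable (fun x => phi x ^ 2) (volume.restrict (Set.Ioo (-(1/2):ℝ) (1/2))))
      = IntegrableOn (fun x => phi x ^ 2) (Set.Ioo (-(1/2):ℝ) (1/2)) volume from rfl, hu]
  refine IntegrableOn.union integrableOn_phi_sq_neg ?_
  rw [IntegrableOn, show volume.restrict (Set.Ico (0:ℝ) (1/2))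
      = volume.restrict (Set.Ioo (0:ℝ) (1/2)) from
    (Measure.restrict_congr_set Ioo_ae_eq_Ico).symm]
  exact integrableOn_phi_sq_pos

/-- With `g = χ_{[-10,10]}` and `f(x) = |x|^{-1/2}(-log|x|)^{-1} χ_{[-1/2,1/2]}(x)`,
one has `f ∈ L²(ℝ)` and `S²(f,g)(x) = +∞` for every `1/4 ≤ x ≤ 1/2`; in particular `S²(f,g)`
is infinite on a set of positive measure. -/
theorem bilinear_spherical_maximal_infinite_counterexample :
    let g : ℝ → ℝ := Set.indicator (Set.Icc (-10 : ℝ) 10) 1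
    let f : ℝ → ℝ := Set.indicator (Set.Icc (-(1/2) : ℝ) (1/2))
      (fun x => |x| ^ (-(1/2) : ℝ) * (-Real.log |x|)⁻¹)
    MemLp f 2 volume ∧
      (∀ x ∈ Set.Icc (1/4 : ℝ) (1/2), S2 f g x = ∞) ∧
      0 < volume {x : ℝ | S2 f g x = ∞} := by
  intro g f
  have h2 : ∀ x ∈ Set.Icc (1/4 : ℝ) (1/2), S2 f g x = ∞ := by
    intro x hx
    have h0 : (0:ℝ) < x := lt_of_lt_of_le (by norm_num) hx.1
    have hterm : (ENNReal.ofReal (2*π))⁻¹ *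
        (∫⁻ θ in Set.Ioc (0:ℝ) (2*π),
          ENNReal.ofReal (|ffun (x - x * Real.cos θ)| * |gfun (x - x * Real.sin θ)|)) = ∞ := by
      rw [lint_top hx.1 hx.2]
      exact ENNReal.mul_top (ENNReal.inv_ne_zero.mpr ENNReal.ofReal_ne_top)
    refine eq_top_iff.2 ?_
    rw [← hterm]
    have hS : S2 f g x = ⨆ (t : ℝ) (_ : 0 < t),
        (ENNReal.ofReal (2 * π))⁻¹ *
          ∫⁻ θ in Set.Ioc (0 : ℝ) (2 * π),
            ENNReal.ofReal (|ffun (x - t * Real.cos θ)| * |gfun (x - t * Real.sin θ)|) := rfl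
    rw [hS]
    exact le_iSup₂ (f := fun (t : ℝ) (_ : 0 < t) =>
      (ENNReal.ofReal (2 * π))⁻¹ *
        ∫⁻ θ in Set.Ioc (0 : ℝ) (2 * π),
          ENNReal.ofReal (|ffun (x - t * Real.cos θ)| * |gfun (x - t * Real.sin θ)|)) x h0
  refine ⟨memL2, h2, ?_⟩
  have hsub : Set.Icc (1/4 : ℝ) (1/2) ⊆ {x : ℝ | S2 f g x = ∞} := fun x hx => h2 x hx
  have hpos : (0 : ℝ≥0∞) < volume (Set.Icc (1/4 : ℝ) (1/2)) := by
    rw [Real.volume_Icc]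
    exact ENNReal.ofReal_pos.2 (by norm_num)
  exact lt_of_lt_of_le hpos (measure_mono hsub)
end

section
/- Let m ≥ 2, let 1 ≤ p_i ≤ ∞ for i = 1,…,m, and let 1/p = Σ_{i=1}^m 1/p_i. If there exists a finite constant C such that ‖S^m(f_1,…,f_m)‖_{L^p(ℝ)} ≤ C Π_{i=1}^m ‖f_i‖_{L^{p_i}(ℝ)} for all bounded compactly supported measurable functions f_1,…,f_m, then Σ_{i=1}^m 1/p_i ≤ m − 1. -/
open MeasureTheory Real Set
open scoped ENNReal NNReal Pointwise
set_option maxHeartbeats 1000000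

lemma euclid_abs_apply_le_norm {m : ℕ} (z : EuclideanSpace ℝ (Fin m)) (i : Fin m) :
    |z i| ≤ ‖z‖ := by
  rw [EuclideanSpace.norm_eq]
  have h1 : |z i| = Real.sqrt (‖z i‖ ^ 2) := by
    rw [Real.sqrt_sq_eq_abs, Real.norm_eq_abs, abs_abs]
  rw [h1]
  exact Real.sqrt_le_sqrt (Finset.single_le_sum (f := fun j => ‖z j‖ ^ 2)
    (fun j _ => sq_nonneg _) (Finset.mem_univ i))

lemma cap_measure_lb (m : ℕ) (hm : 1 ≤ m) (y0 : EuclideanSpace ℝ (Fin m)) (hy0 : ‖y0‖ = 1)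
    (r : ℝ) (hr0 : 0 < r) (hr1 : r ≤ 1) :
    (m : ℝ≥0∞) * (ENNReal.ofReal (1/4) * ENNReal.ofReal (r / (4 * Real.sqrt m)) ^ (m - 1)) ≤
      (volume : Measure (EuclideanSpace ℝ (Fin m))).toSphere
        {y : Metric.sphere (0 : EuclideanSpace ℝ (Fin m)) 1 |
          ‖(y : EuclideanSpace ℝ (Fin m)) - y0‖ < r} := by
  have hmR : (1 : ℝ) ≤ m := by exact_mod_cast hm
  have hsm : (1 : ℝ) ≤ Real.sqrt m := by
    rw [show (1:ℝ) = Real.sqrt 1 by simp]; exact Real.sqrt_le_sqrt hmR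
  set i0 : Fin m := ⟨0, by omega⟩ with hi0
  set δ : ℝ := r / (8 * Real.sqrt m) with hδ
  have hδ0 : 0 < δ := div_pos hr0 (by linarith)
  have h2δ : 2 * δ = r / (4 * Real.sqrt m) := by rw [hδ]; ring
  -- the orthonormal basis
  have hcard : Module.finrank ℝ (EuclideanSpace ℝ (Fin m)) = Fintype.card (Fin m) := by
    simp [finrank_euclideanSpace_fin]
  have horth : Orthonormal ℝ (({i0} : Set (Fin m)).restrict (fun _ => y0)) := by
    rw [orthonormal_iff_ite]
    intro i j
    have hij : i = j := Subtype.ext (by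
      have hi := i.2; have hj := j.2
      simp only [Set.mem_singleton_iff] at hi hj
      rw [hi, hj])
    subst hij
    rw [if_pos rfl]
    show (inner (𝕜 := ℝ) y0 y0) = 1
    rw [real_inner_self_eq_norm_sq, hy0]; norm_num
  obtain ⟨b, hb0⟩ := horth.exists_orthonormalBasis_extension_of_card_eq hcard
  have hb0' : b i0 = y0 := hb0 i0 rfl
  -- measurability of the cap
  set capS : Set (Metric.sphere (0 : EuclideanSpace ℝ (Fin m)) 1) :=
    {y | ‖(y : EuclideanSpace ℝ (Fin m)) - y0‖ < r} with hcapS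
  have hcapmeas : MeasurableSet capS := by
    have : capS = (Subtype.val) ⁻¹' (Metric.ball y0 r) := by
      ext y; simp [capS, Metric.mem_ball, dist_eq_norm]
    rw [this]
    exact measurableSet_ball.preimage continuous_subtype_val.measurable
  rw [Measure.toSphere_apply' _ hcapmeas]
  -- the box
  set Bpi : Set (Fin m → ℝ) :=
    Set.univ.pi (fun i => if i = i0 then Ioo (1/2 : ℝ) (3/4) else Ioo (-δ) δ) with hBpi
  have hBpimeas : MeasurableSet Bpi :=
    MeasurableSet.univ_pi (fun i => by split <;> exact measurableSet_Ioo)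
  set B : Set (EuclideanSpace ℝ (Fin m)) :=
    (MeasurableEquiv.toLp 2 (Fin m → ℝ)).symm ⁻¹' Bpi with hB
  have hBmeas : MeasurableSet B := (MeasurableEquiv.toLp 2 (Fin m → ℝ)).symm.measurable hBpimeas
  -- volume of the box
  have hvolB : volume B = ENNReal.ofReal (1/4) * ENNReal.ofReal (2*δ) ^ (m - 1) := by
    have h1 : volume B = (volume : Measure (Fin m → ℝ)) Bpi :=
      (EuclideanSpace.volume_preserving_symm_measurableEquiv_toLp (Fin m)).measure_preimage
        hBpimeas.nullMeasurableSet
    rw [h1, hBpi, volume_pi_pi]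
    have h2 : ∀ i : Fin m, volume (if i = i0 then Ioo (1/2 : ℝ) (3/4) else Ioo (-δ) δ)
        = if i = i0 then ENNReal.ofReal (1/4) else ENNReal.ofReal (2*δ) := by
      intro i; split
      · rw [Real.volume_Ioo]; norm_num
      · rw [Real.volume_Ioo]; congr 1; ring
    calc ∏ i : Fin m, volume (if i = i0 then Ioo (1/2 : ℝ) (3/4) else Ioo (-δ) δ)
        = ∏ i : Fin m, (if i = i0 then ENNReal.ofReal (1/4) else ENNReal.ofReal (2*δ)) :=
          Finset.prod_congr rfl fun i _ => h2 i
      _ = ENNReal.ofReal (1/4) * ENNReal.ofReal (2*δ) ^ (m - 1) := by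
          rw [← Finset.mul_prod_erase Finset.univ _ (Finset.mem_univ i0), if_pos rfl]
          congr 1
          rw [Finset.prod_congr rfl (fun i hi => if_neg (Finset.ne_of_mem_erase hi)),
            Finset.prod_const, Finset.card_erase_of_mem (Finset.mem_univ i0),
            Finset.card_univ, Fintype.card_fin]
  -- geometry: preimage of the box under b.repr sits inside the cone over the cap
  have hsubset : (⇑b.repr) ⁻¹' B ⊆ Ioo (0:ℝ) 1 • (Subtype.val '' capS) := by
    intro x hx
    set z : EuclideanSpace ℝ (Fin m) := b.repr x with hz
    have hx' : ∀ i : Fin m, z i ∈ (if i = i0 then Ioo (1/2 : ℝ) (3/4) else Ioo (-δ) δ) := by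
      intro i
      have h := hx
      rw [Set.mem_preimage, hB, Set.mem_preimage, hBpi, Set.mem_univ_pi] at h
      exact h i
    have hz0 : z i0 ∈ Ioo (1/2:ℝ) (3/4) := by have := hx' i0; rwa [if_pos rfl] at this
    have hzi : ∀ i : Fin m, i ≠ i0 → |z i| < δ := by
      intro i hi
      have := hx' i; rw [if_neg hi] at this
      exact abs_lt.2 ⟨this.1, this.2⟩
    set S : ℝ := ∑ i ∈ Finset.univ.erase i0, (z i)^2 with hS
    have hS0 : 0 ≤ S := Finset.sum_nonneg fun i _ => sq_nonneg _
    have hδsq : δ^2 = r^2 / (64 * m) := by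
      rw [hδ, div_pow, mul_pow, Real.sq_sqrt (by positivity : (0:ℝ) ≤ (m:ℝ))]; ring
    have hm0 : (m:ℝ) ≠ 0 := by positivity
    have hSle : S ≤ r^2/64 := by
      have h1 : S ≤ ((m:ℝ)) * δ^2 := by
        calc S ≤ (Finset.univ.erase i0).card • δ^2 :=
              Finset.sum_le_card_nsmul _ _ _ (fun i hi => by
                rw [← sq_abs]
                exact pow_le_pow_left₀ (abs_nonneg _) (hzi i (Finset.ne_of_mem_erase hi)).le 2)
          _ ≤ (m:ℝ) * δ^2 := by
              rw [nsmul_eq_mul]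
              apply mul_le_mul_of_nonneg_right _ (sq_nonneg _)
              rw [Finset.card_erase_of_mem (Finset.mem_univ i0), Finset.card_univ,
                Fintype.card_fin]
              exact_mod_cast Nat.sub_le m 1
      rw [hδsq] at h1
      calc S ≤ (m:ℝ) * (r^2/(64*m)) := h1
        _ = r^2/64 := by field_simp; try ring
    have hS1 : S ≤ 1/64 := by nlinarith
    set N : ℝ := ‖z‖ with hN
    have hNx : ‖x‖ = N := by rw [hN, hz]; exact (b.repr.norm_map x).symm
    have hNsq : N^2 = (z i0)^2 + S := by
      rw [hN, EuclideanSpace.norm_eq,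
        Real.sq_sqrt (Finset.sum_nonneg fun i _ => sq_nonneg _)]
      rw [← Finset.add_sum_erase Finset.univ _ (Finset.mem_univ i0)]
      congr 1
      · rw [Real.norm_eq_abs, sq_abs]
      · exact Finset.sum_congr rfl fun i _ => by rw [Real.norm_eq_abs, sq_abs]
    have hzi0N : z i0 ≤ N := le_trans (le_abs_self _) (euclid_abs_apply_le_norm z i0)
    have hNhalf : 1/2 < N := lt_of_lt_of_le hz0.1 hzi0N
    have hN0 : 0 < N := by linarith
    have hz0sq : (z i0)^2 < 9/16 := by nlinarith [hz0.1, hz0.2]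
    have hN2 : N^2 < 1 := by linarith [hNsq, hS1, hz0sq]
    have hN1 : N < 1 := by nlinarith [hN2, hN0]
    have hNz0 : N - z i0 ≤ S := by
      have h := mul_nonneg (sub_nonneg.2 hzi0N)
        (by linarith [hz0.1, hNhalf] : (0:ℝ) ≤ N + z i0 - 1)
      nlinarith [hNsq]
    have hw : ‖N⁻¹ • x - y0‖ < r := by
      have hrepr : b.repr (N⁻¹ • x - y0) = N⁻¹ • z - EuclideanSpace.single i0 (1:ℝ) := by
        rw [map_sub, LinearIsometryEquiv.map_smul, ← hb0', b.repr_self, hz]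
      have hnorm : ‖N⁻¹ • x - y0‖ = ‖N⁻¹ • z - EuclideanSpace.single i0 (1:ℝ)‖ := by
        rw [← hrepr, b.repr.norm_map]
      have happ : ∀ i : Fin m, (N⁻¹ • z - EuclideanSpace.single i0 (1:ℝ)) i
          = N⁻¹ * z i - (if i = i0 then 1 else 0) := by
        intro i
        simp [EuclideanSpace.single_apply]
      have key : ∑ i : Fin m, ‖(N⁻¹ • z - EuclideanSpace.single i0 (1:ℝ)) i‖^2 < r^2 := by
        have hsplit : ∑ i : Fin m, ‖(N⁻¹ • z - EuclideanSpace.single i0 (1:ℝ)) i‖^2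
            = (N⁻¹ * z i0 - 1)^2 + (N⁻¹)^2 * S := by
          rw [← Finset.add_sum_erase Finset.univ _ (Finset.mem_univ i0)]
          congr 1
          · rw [happ i0, if_pos rfl, Real.norm_eq_abs, sq_abs]
          · rw [hS, Finset.mul_sum]
            refine Finset.sum_congr rfl fun i hi => ?_
            rw [happ i, if_neg (Finset.ne_of_mem_erase hi), Real.norm_eq_abs, sq_abs, sub_zero]
            try ring
        rw [hsplit]
        have hA : (N⁻¹ * z i0 - 1)^2 ≤ S^2 * (N⁻¹)^2 := by
          have heq : N⁻¹ * z i0 - 1 = (z i0 - N) * N⁻¹ := by field_simp; try ring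
          rw [heq, mul_pow]
          apply mul_le_mul_of_nonneg_right _ (sq_nonneg _)
          exact sq_le_sq' (by linarith) (by linarith)
        have hNinv : (N⁻¹)^2 ≤ 4 := by
          rw [← one_div, div_pow, one_pow, div_le_iff₀ (by positivity)]
          nlinarith
        nlinarith [hA, mul_le_mul_of_nonneg_right hNinv hS0,
          mul_le_mul_of_nonneg_left hS1 hS0, hS0, hSle, mul_pos hr0 hr0,
          sq_nonneg N⁻¹]
      rw [hnorm, EuclideanSpace.norm_eq]
      calc Real.sqrt (∑ i : Fin m, ‖(N⁻¹ • z - EuclideanSpace.single i0 (1:ℝ)) i‖^2)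
          < Real.sqrt (r^2) :=
            Real.sqrt_lt_sqrt (Finset.sum_nonneg fun i _ => sq_nonneg _) key
        _ = r := Real.sqrt_sq hr0.le
    refine Set.mem_smul.2 ⟨N, Set.mem_Ioo.2 ⟨hN0, hN1⟩, N⁻¹ • x, ?_, smul_inv_smul₀ (ne_of_gt hN0) x⟩
    refine ⟨⟨N⁻¹ • x, ?_⟩, hw, rfl⟩
    rw [mem_sphere_zero_iff_norm, norm_smul, hNx, Real.norm_eq_abs,
      abs_of_pos (inv_pos.2 hN0)]
    field_simp
  have hmono : volume B ≤ volume (Ioo (0:ℝ) 1 • (Subtype.val '' capS)) := by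
    have h := measure_mono (μ := (volume : Measure (EuclideanSpace ℝ (Fin m)))) hsubset
    rwa [b.measurePreserving_repr.measure_preimage hBmeas.nullMeasurableSet] at h
  have hfr : Module.finrank ℝ (EuclideanSpace ℝ (Fin m)) = m := finrank_euclideanSpace_fin
  rw [hfr]
  calc (m:ℝ≥0∞) * (ENNReal.ofReal (1/4) * ENNReal.ofReal (r / (4 * Real.sqrt m)) ^ (m - 1))
      = (m:ℝ≥0∞) * volume B := by rw [hvolB, h2δ]
    _ ≤ (m:ℝ≥0∞) * volume (Ioo (0:ℝ) 1 • (Subtype.val '' capS)) := mul_le_mul_right hmono _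

lemma Sm_lb (m : ℕ) (hm : 1 ≤ m) (x : ℝ) (hx : 1 < x) :
    ((volume : Measure (EuclideanSpace ℝ (Fin m))).toSphere Set.univ)⁻¹ *
      ((m : ℝ≥0∞) * (ENNReal.ofReal (1/4) *
        ENNReal.ofReal ((4*(m:ℝ)*x)⁻¹) ^ (m - 1))) ≤
      Sm m (fun _ => (Set.Icc (-1:ℝ) 1).indicator (fun _ => (1:ℝ))) x := by
  have hmR : (1 : ℝ) ≤ m := by exact_mod_cast hm
  have hsm : (1 : ℝ) ≤ Real.sqrt m := by
    rw [show (1:ℝ) = Real.sqrt 1 by simp]; exact Real.sqrt_le_sqrt hmR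
  have hsm0 : (0:ℝ) < Real.sqrt m := by linarith
  have hx0 : (0:ℝ) < x := by linarith
  set f : Fin m → ℝ → ℝ := fun _ => (Set.Icc (-1:ℝ) 1).indicator (fun _ => (1:ℝ)) with hf
  set t : ℝ := Real.sqrt m * x with htdef
  have ht : 0 < t := mul_pos hsm0 hx0
  have ht1 : 1 ≤ t := by
    calc (1:ℝ) = 1 * 1 := by norm_num
      _ ≤ Real.sqrt m * x := by
          apply mul_le_mul hsm hx.le zero_le_one (le_of_lt hsm0)
  set r : ℝ := t⁻¹ with hrdef
  have hr0 : 0 < r := inv_pos.2 ht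
  have hr1 : r ≤ 1 := by
    rw [hrdef]
    exact inv_le_one_of_one_le₀ ht1
  set y0 : EuclideanSpace ℝ (Fin m) := WithLp.toLp 2 (fun _ => (Real.sqrt m)⁻¹) with hy0def
  have hy0 : ‖y0‖ = 1 := by
    rw [EuclideanSpace.norm_eq]
    have h1 : ∀ i : Fin m, ‖y0 i‖^2 = (m:ℝ)⁻¹ := by
      intro i
      rw [Real.norm_eq_abs, sq_abs]
      show ((Real.sqrt m)⁻¹)^2 = (m:ℝ)⁻¹
      rw [inv_pow, Real.sq_sqrt (by positivity : (0:ℝ) ≤ (m:ℝ))]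
    rw [Finset.sum_congr rfl fun i _ => h1 i, Finset.sum_const, Finset.card_univ,
      Fintype.card_fin, nsmul_eq_mul, mul_inv_cancel₀ (by positivity : (m:ℝ) ≠ 0),
      Real.sqrt_one]
  set capS : Set (Metric.sphere (0 : EuclideanSpace ℝ (Fin m)) 1) :=
    {y | ‖(y : EuclideanSpace ℝ (Fin m)) - y0‖ < r} with hcapS
  have hcapmeas : MeasurableSet capS := by
    have : capS = (Subtype.val) ⁻¹' (Metric.ball y0 r) := by
      ext y; simp [capS, Metric.mem_ball, dist_eq_norm]
    rw [this]
    exact measurableSet_ball.preimage continuous_subtype_val.measurable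
  -- rewrite the constant as the cap bound
  have hrconv : r / (4 * Real.sqrt m) = (4*(m:ℝ)*x)⁻¹ := by
    rw [hrdef, htdef, div_eq_mul_inv, ← mul_inv]
    congr 1
    calc Real.sqrt m * x * (4 * Real.sqrt m) = 4 * (Real.sqrt m * Real.sqrt m) * x := by ring
      _ = 4*(m:ℝ)*x := by rw [Real.mul_self_sqrt (by positivity : (0:ℝ) ≤ (m:ℝ))]
  have hcap := cap_measure_lb m hm y0 hy0 r hr0 hr1
  rw [hrconv] at hcap
  -- the spherical average dominates the cap measure
  have havg : sphMeasure m capS ≤ sphAvg m f t x := by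
    have hpt : ∀ y : Metric.sphere (0 : EuclideanSpace ℝ (Fin m)) 1,
        capS.indicator (fun _ => (1:ℝ≥0∞)) y ≤
          ∏ i, ENNReal.ofReal |f i (x - t * (y : EuclideanSpace ℝ (Fin m)) i)| := by
      intro y
      by_cases hy : y ∈ capS
      · rw [Set.indicator_of_mem hy]
        have hterm : ∀ i : Fin m,
            ENNReal.ofReal |f i (x - t * (y : EuclideanSpace ℝ (Fin m)) i)| = 1 := by
          intro i
          have harg : x - t * (y : EuclideanSpace ℝ (Fin m)) i ∈ Set.Icc (-1:ℝ) 1 := by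
            have hxt : t * (Real.sqrt m)⁻¹ = x := by
              rw [htdef]
              field_simp
            have heq : x - t * (y : EuclideanSpace ℝ (Fin m)) i
                = t * ((Real.sqrt m)⁻¹ - (y : EuclideanSpace ℝ (Fin m)) i) := by
              rw [mul_sub, hxt]
            have hco : |(Real.sqrt m)⁻¹ - (y : EuclideanSpace ℝ (Fin m)) i| < r := by
              have h1 : ((y : EuclideanSpace ℝ (Fin m)) - y0) i
                  = (y : EuclideanSpace ℝ (Fin m)) i - (Real.sqrt m)⁻¹ := rfl
              have h2 := euclid_abs_apply_le_norm
                ((y : EuclideanSpace ℝ (Fin m)) - y0) i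
              rw [h1] at h2
              rw [abs_sub_comm]
              exact lt_of_le_of_lt h2 hy
            have habs : |x - t * (y : EuclideanSpace ℝ (Fin m)) i| < 1 := by
              rw [heq, abs_mul, abs_of_pos ht]
              calc t * |(Real.sqrt m)⁻¹ - (y : EuclideanSpace ℝ (Fin m)) i|
                  < t * r := by
                    exact mul_lt_mul_of_pos_left hco ht
                _ = 1 := by rw [hrdef]; field_simp
            have := abs_le.1 habs.le
            exact Set.mem_Icc.2 this
          show ENNReal.ofReal |(Set.Icc (-1:ℝ) 1).indicator (fun _ => (1:ℝ))
            (x - t * (y : EuclideanSpace ℝ (Fin m)) i)| = 1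
          rw [Set.indicator_of_mem harg]
          norm_num
        rw [Finset.prod_congr rfl fun i _ => hterm i, Finset.prod_const_one]
      · rw [Set.indicator_of_notMem hy]; exact zero_le
    calc sphMeasure m capS
        = ∫⁻ y, capS.indicator (fun _ => (1:ℝ≥0∞)) y ∂(sphMeasure m) := by
          rw [lintegral_indicator hcapmeas]
          simp
      _ ≤ sphAvg m f t x := lintegral_mono hpt
  have hSm : sphAvg m f t x ≤ Sm m f x :=
    le_iSup₂ (f := fun (s : ℝ) (_ : 0 < s) => sphAvg m f s x) t ht
  -- assemble
  have hσ : sphMeasure m capS =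
      ((volume : Measure (EuclideanSpace ℝ (Fin m))).toSphere Set.univ)⁻¹ *
        (volume : Measure (EuclideanSpace ℝ (Fin m))).toSphere capS := by
    rw [sphMeasure, Measure.smul_apply, smul_eq_mul]
  calc ((volume : Measure (EuclideanSpace ℝ (Fin m))).toSphere Set.univ)⁻¹ *
      ((m : ℝ≥0∞) * (ENNReal.ofReal (1/4) * ENNReal.ofReal ((4*(m:ℝ)*x)⁻¹) ^ (m - 1)))
      ≤ ((volume : Measure (EuclideanSpace ℝ (Fin m))).toSphere Set.univ)⁻¹ *
        (volume : Measure (EuclideanSpace ℝ (Fin m))).toSphere capS :=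
        mul_le_mul_right hcap _
    _ = sphMeasure m capS := hσ.symm
    _ ≤ sphAvg m f t x := havg
    _ ≤ Sm m f x := hSm

/-- Necessity of condition (a): if the strong-type bound holds for all bounded
compactly supported measurable functions, then `Σ 1/pᵢ ≤ m - 1`. -/
theorem multilinear_spherical_maximal_necessity_a
    (m : ℕ) (hm : 2 ≤ m) (p : Fin m → ℝ≥0∞) (hp : ∀ i, 1 ≤ p i)
    (P : ℝ≥0∞) (hP : P⁻¹ = ∑ i, (p i)⁻¹)
    (hbound : ∃ C : ℝ≥0∞, C ≠ ∞ ∧ ∀ f : Fin m → ℝ → ℝ,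
      (∀ i, Measurable (f i) ∧ (∃ M : ℝ, ∀ x, |f i x| ≤ M) ∧ HasCompactSupport (f i)) →
      lpNorm P (Sm m f) ≤ C * ∏ i, eLpNorm (f i) (p i) volume) :
    ∑ i, (p i)⁻¹ ≤ (m : ℝ≥0∞) - 1 := by
  by_contra hcon
  push_neg at hcon
  -- basic facts about P
  have hm1 : 1 ≤ m := le_trans one_le_two hm
  have hsum_le : ∑ i, (p i)⁻¹ ≤ (m : ℝ≥0∞) := by
    calc ∑ i, (p i)⁻¹ ≤ ∑ _i : Fin m, (1:ℝ≥0∞) :=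
          Finset.sum_le_sum fun i _ => ENNReal.inv_le_one.2 (hp i)
      _ = (m : ℝ≥0∞) := by simp
  have hPinv_le : P⁻¹ ≤ (m : ℝ≥0∞) := by rw [hP]; exact hsum_le
  have hPinv_ne_top : P⁻¹ ≠ ⊤ :=
    ne_top_of_le_ne_top (ENNReal.natCast_ne_top m) hPinv_le
  have hP_ne_zero : P ≠ 0 := by
    intro h
    rw [h, ENNReal.inv_zero] at hPinv_ne_top
    exact hPinv_ne_top rfl
  have hP_ne_top : P ≠ ⊤ := by
    intro h
    have h0 : (0:ℝ≥0∞) = ∑ i, (p i)⁻¹ := by rw [← hP, h, ENNReal.inv_top]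
    rw [← h0] at hcon
    exact (not_lt.2 zero_le) hcon
  set pt : ℝ := P.toReal with hptdef
  have hpt : 0 < pt := ENNReal.toReal_pos hP_ne_zero hP_ne_top
  set k : ℕ := m - 1 with hkdef
  have hkcast : ((k : ℕ) : ℝ≥0∞) = (m : ℝ≥0∞) - 1 := by
    rw [hkdef, ENNReal.natCast_sub, Nat.cast_one]
  have hklt : ((k : ℕ) : ℝ≥0∞) < P⁻¹ := by rw [hkcast, hP]; exact hcon
  have hkpt : (k : ℝ) * pt ≤ 1 := by
    have h3 : (k : ℝ) < P⁻¹.toReal :=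
      (ENNReal.toReal_lt_toReal (ENNReal.natCast_ne_top k) hPinv_ne_top).2 hklt
    rw [ENNReal.toReal_inv] at h3
    have h4 : (k : ℝ) * pt < pt⁻¹ * pt := by
      exact mul_lt_mul_of_pos_right h3 hpt
    rw [inv_mul_cancel₀ (ne_of_gt hpt)] at h4
    exact h4.le
  -- the test functions
  set f : Fin m → ℝ → ℝ := fun _ => (Set.Icc (-1:ℝ) 1).indicator (fun _ => (1:ℝ)) with hfdef
  have hfprops : ∀ i, Measurable (f i) ∧ (∃ M : ℝ, ∀ x, |f i x| ≤ M) ∧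
      HasCompactSupport (f i) := by
    intro i
    refine ⟨measurable_const.indicator measurableSet_Icc, ⟨1, fun x => ?_⟩, ?_⟩
    · show |(Set.Icc (-1:ℝ) 1).indicator (fun _ => (1:ℝ)) x| ≤ 1
      rw [Set.indicator_apply]
      split <;> simp
    · exact HasCompactSupport.intro isCompact_Icc
        (fun x hx => Set.indicator_of_notMem hx _)
  have hfnorm : ∀ i, eLpNorm (f i) (p i) volume ≠ ⊤ := by
    intro i
    have h1 := eLpNorm_indicator_const_le (μ := (volume : Measure ℝ))
      (s := Set.Icc (-1:ℝ) 1) (1:ℝ) (p i)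
    refine ne_top_of_le_ne_top ?_ h1
    rw [Real.volume_Icc]
    have h2 : ENNReal.ofReal (1 - (-1)) ^ (1 / (p i).toReal) ≠ ⊤ :=
      (ENNReal.rpow_lt_top_of_nonneg (by positivity) ENNReal.ofReal_ne_top).ne
    simp only [enorm_one, one_mul]
    exact h2
  -- constants
  set T : ℝ≥0∞ := (volume : Measure (EuclideanSpace ℝ (Fin m))).toSphere Set.univ with hTdef
  have hT_ne_top : T ≠ ⊤ := measure_ne_top _ _
  set c1 : ℝ≥0∞ := T⁻¹ * ((m:ℝ≥0∞) * ENNReal.ofReal (1/4)) *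
    ENNReal.ofReal (((4*(m:ℝ))^k)⁻¹) with hc1def
  have hm0R : (0:ℝ) < m := by exact_mod_cast Nat.lt_of_lt_of_le Nat.zero_lt_one hm1
  have hc1_ne_zero : c1 ≠ 0 := by
    rw [hc1def]
    apply mul_ne_zero
    apply mul_ne_zero
    · exact ENNReal.inv_ne_zero.2 hT_ne_top
    · apply mul_ne_zero
      · exact_mod_cast Nat.cast_ne_zero.2 (Nat.one_le_iff_ne_zero.1 hm1)
      · simp only [ne_eq, ENNReal.ofReal_eq_zero, not_le]; norm_num
    · simp only [ne_eq, ENNReal.ofReal_eq_zero, not_le]; positivity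
  -- the pointwise lower bound on (1, ∞)
  have hSmlb : ∀ x : ℝ, 1 < x → c1 * ENNReal.ofReal ((x^k)⁻¹) ≤ Sm m f x := by
    intro x hx
    have hx0 : (0:ℝ) < x := lt_trans one_pos hx
    have h := Sm_lb m hm1 x hx
    refine le_trans (le_of_eq ?_) h
    have h1 : ((4*(m:ℝ)*x)⁻¹) = ((4*(m:ℝ))⁻¹) * x⁻¹ := by rw [mul_inv]
    have h2 : ENNReal.ofReal ((4*(m:ℝ)*x)⁻¹) ^ k
        = ENNReal.ofReal (((4*(m:ℝ))^k)⁻¹) * ENNReal.ofReal ((x^k)⁻¹) := by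
      rw [← ENNReal.ofReal_pow (by positivity), h1, mul_pow, ← inv_pow, ← inv_pow,
        ENNReal.ofReal_mul (by positivity), inv_pow, inv_pow]
    rw [hc1def, h2]
    ring
  -- the divergent integral
  have hint_top : ∫⁻ x in Ioi (1:ℝ), ENNReal.ofReal x⁻¹ = ⊤ := by
    by_contra hfin
    have hintg : IntegrableOn (fun x : ℝ => x⁻¹) (Ioi (1:ℝ)) volume := by
      constructor
      · exact measurable_inv.aestronglyMeasurable
      · rw [hasFiniteIntegral_iff_ofReal ?_]
        · exact lt_top_iff_ne_top.2 hfin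
        · filter_upwards [ae_restrict_mem measurableSet_Ioi] with x hx
          exact inv_nonneg.2 (le_of_lt (lt_trans one_pos hx))
    exact not_IntegrableOn_Ioi_inv hintg
  -- pointwise comparison of powers
  have hptle : ∀ x : ℝ, 1 < x →
      ENNReal.ofReal x⁻¹ ≤ ENNReal.ofReal ((x^k)⁻¹) ^ pt := by
    intro x hx
    have hx0 : (0:ℝ) < x := lt_trans one_pos hx
    rw [ENNReal.ofReal_rpow_of_pos (by positivity)]
    apply ENNReal.ofReal_le_ofReal
    have h1 : ((x^k : ℝ))⁻¹ = x ^ (-(k:ℝ)) := by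
      rw [← Real.rpow_natCast x k, ← Real.rpow_neg hx0.le]
    have h2 : x⁻¹ = x ^ (-1 : ℝ) := (Real.rpow_neg_one x).symm
    rw [h1, h2, ← Real.rpow_mul hx0.le]
    apply Real.rpow_le_rpow_of_exponent_le hx.le
    nlinarith [hkpt]
  -- the L^p norm is infinite
  have hLp_top : ∫⁻ x, (Sm m f x) ^ pt = ⊤ := by
    have hmono : ∀ x : ℝ,
        (Ioi (1:ℝ)).indicator (fun x => c1 ^ pt * ENNReal.ofReal x⁻¹) x
          ≤ (Sm m f x) ^ pt := by
      intro x
      by_cases hx : x ∈ Ioi (1:ℝ)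
      · rw [Set.indicator_of_mem hx]
        calc c1 ^ pt * ENNReal.ofReal x⁻¹
            ≤ c1 ^ pt * ENNReal.ofReal ((x^k)⁻¹) ^ pt :=
              mul_le_mul_right (hptle x hx) _
          _ = (c1 * ENNReal.ofReal ((x^k)⁻¹)) ^ pt :=
              (ENNReal.mul_rpow_of_nonneg _ _ hpt.le).symm
          _ ≤ (Sm m f x) ^ pt := ENNReal.rpow_le_rpow (hSmlb x hx) hpt.le
      · rw [Set.indicator_of_notMem hx]; exact zero_le
    have h1 : ∫⁻ x, (Ioi (1:ℝ)).indicator (fun x => c1 ^ pt * ENNReal.ofReal x⁻¹) x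
        = c1 ^ pt * ∫⁻ x in Ioi (1:ℝ), ENNReal.ofReal x⁻¹ := by
      rw [lintegral_indicator measurableSet_Ioi,
        lintegral_const_mul _ measurable_inv.ennreal_ofReal]
    have h2 : c1 ^ pt * ∫⁻ x in Ioi (1:ℝ), ENNReal.ofReal x⁻¹ = ⊤ := by
      rw [hint_top, ENNReal.mul_top]
      intro h0
      rcases ENNReal.rpow_eq_zero_iff.1 h0 with ⟨h,_⟩|⟨_,h⟩
      · exact hc1_ne_zero h
      · exact absurd h (not_lt.2 hpt.le)
    have h3 := lintegral_mono (μ := (volume : Measure ℝ)) hmono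
    rw [h1, h2] at h3
    exact top_le_iff.1 h3
  have hlp : lpNorm P (Sm m f) = ⊤ := by
    rw [_root_.lpNorm, if_neg hP_ne_top, hLp_top]
    exact ENNReal.top_rpow_of_pos (by positivity)
  -- contradiction with the assumed bound
  obtain ⟨C, hC, hb⟩ := hbound
  have hle := hb f hfprops
  rw [hlp] at hle
  have hfin : C * ∏ i, eLpNorm (f i) (p i) volume ≠ ⊤ := by
    apply ENNReal.mul_ne_top hC
    exact (ENNReal.prod_lt_top fun i _ => lt_top_iff_ne_top.2 (hfnorm i)).ne
  exact hfin (top_le_iff.1 hle)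
end

section
/- Let f, g : ℝ → [0,∞) be measurable, let 0 < ε < 1, and let q > 1 with conjugate exponent q' = q/(q−1) satisfy ε q' < 2. Then there exists a constant C < ∞, depending only on ε and q, such that for every x ∈ ℝ: sup_{t>0} ∫_0^{1/√2} f(x − t y) g(x − t √(1−y²)) (1−y²)^{−1/2} dy ≤ C · [sup_{t>0} ( ∫_0^{1/√2} f(x − t y)² y^{−1+ε} dy )^{1/2}] · [sup_{t>0} ( ∫_{1/√2}^1 g(x − t z)^{2q} dz )^{1/(2q)}]. -/
open MeasureTheory Real Set
open scoped ENNReal NNReal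

lemma lintegral_image_eq_lintegral_abs_deriv_mul' {s : Set ℝ} {φ φ' : ℝ → ℝ}
    (hs : MeasurableSet s) (hφ' : ∀ x ∈ s, HasDerivWithinAt φ (φ' x) s x)
    (hφ : Set.InjOn φ s) (g : ℝ → ℝ≥0∞) :
    ∫⁻ x in φ '' s, g x = ∫⁻ x in s, ENNReal.ofReal |φ' x| * g (φ x) := by
  simpa only [ContinuousLinearMap.det_toSpanSingleton] using
    MeasureTheory.lintegral_image_eq_lintegral_abs_det_fderiv_mul volume hs
      (fun x hx => (hφ' x hx).hasFDerivWithinAt) hφ g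

set_option maxHeartbeats 2000000 in
/-- key pointwise estimate in the proof of the bilinear bound: the weighted
arc average of `f ⊗ g` is dominated by a product of two weighted `p`-maximal functions. -/
theorem bilinear_arc_pointwise_estimate
    (ε : ℝ) (hε0 : 0 < ε) (hε1 : ε < 1) (q : ℝ) (hq : 1 < q)
    (q' : ℝ) (hq' : q' = q / (q - 1)) (hεq : ε * q' < 2) :
    ∃ C : ℝ, ∀ f g : ℝ → ℝ, Measurable f → Measurable g →
      (∀ x, 0 ≤ f x) → (∀ x, 0 ≤ g x) → ∀ x : ℝ,
      (⨆ (t : ℝ) (_ : 0 < t),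
          ∫⁻ y in Set.Ioc (0 : ℝ) (Real.sqrt 2)⁻¹,
            ENNReal.ofReal
              (f (x - t * y) * g (x - t * Real.sqrt (1 - y ^ 2)) *
                (Real.sqrt (1 - y ^ 2))⁻¹)) ≤
        ENNReal.ofReal C *
          ((⨆ (t : ℝ) (_ : 0 < t),
              (∫⁻ y in Set.Ioc (0 : ℝ) (Real.sqrt 2)⁻¹,
                ENNReal.ofReal (f (x - t * y) ^ 2 * y ^ (-1 + ε))) ^ (1 / 2 : ℝ)) *
            (⨆ (t : ℝ) (_ : 0 < t),
              (∫⁻ z in Set.Ioc ((Real.sqrt 2)⁻¹) (1 : ℝ),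
                ENNReal.ofReal (g (x - t * z) ^ (2 * q))) ^ (1 / (2 * q)))) := by
  -- basic numerology
  have hq0 : (0:ℝ) < q := lt_trans one_pos hq
  have hq10 : (0:ℝ) < q - 1 := by linarith
  have hq'0 : 0 < q' := hq' ▸ div_pos hq0 hq10
  have hq'1 : 1 < q' := by rw [hq', lt_div_iff₀ hq10]; linarith
  have hconj : Real.HolderConjugate q q' := by
    exact (Real.holderConjugate_iff_eq_conjExponent hq).2 hq'
  have h2εq : 0 < 2 - ε * q' := by linarith
  have h12q : (0:ℝ) ≤ 1 / (2 * q) := le_of_lt (div_pos one_pos (by linarith))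
  have h12q' : (0:ℝ) ≤ 1 / (2 * q') := le_of_lt (div_pos one_pos (by linarith))
  have h2q : (0:ℝ) ≤ 2 * q := by linarith
  have h2q' : (0:ℝ) ≤ 2 * q' := by linarith
  have hD0 : (0:ℝ) ≤ (2:ℝ) ^ q' / (2 - ε * q') :=
    div_nonneg (Real.rpow_nonneg (by norm_num) _) h2εq.le
  -- abbreviations
  set r : ℝ := (Real.sqrt 2)⁻¹ with hrdef
  have hr0 : 0 < r := by positivity
  have hrsq : r ^ 2 = 1 / 2 := by
    rw [hrdef, inv_pow, Real.sq_sqrt (by norm_num : (0:ℝ) ≤ 2)]; norm_num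
  have hr1 : r ≤ 1 := by nlinarith
  set a : ℝ := (ε - 1) / 2 with hadef
  set b : ℝ := 1 / (2 * q) with hbdef
  set c : ℝ := (1 - ε) / 2 - 1 / (2 * q) with hcdef
  -- the constant
  refine ⟨((2:ℝ) ^ q' / (2 - ε * q')) ^ (1 / (2 * q')), ?_⟩
  intro f g hf hg hf0 hg0 x
  set C : ℝ := ((2:ℝ) ^ q' / (2 - ε * q')) ^ (1 / (2 * q')) with hCdef
  -- the two suprema on the RHS
  set F : ℝ≥0∞ := ⨆ (t : ℝ) (_ : 0 < t),
      (∫⁻ y in Set.Ioc (0 : ℝ) r,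
        ENNReal.ofReal (f (x - t * y) ^ 2 * y ^ (-1 + ε))) ^ (1 / 2 : ℝ) with hFdef
  set G : ℝ≥0∞ := ⨆ (t : ℝ) (_ : 0 < t),
      (∫⁻ z in Set.Ioc r (1:ℝ),
        ENNReal.ofReal (g (x - t * z) ^ (2 * q))) ^ (1 / (2 * q)) with hGdef
  refine iSup_le fun t => iSup_le fun ht => ?_
  -- the three factors
  set A : ℝ → ℝ≥0∞ := fun y => ENNReal.ofReal (f (x - t * y) * y ^ a) with hAdef
  set B : ℝ → ℝ≥0∞ :=
    fun y => ENNReal.ofReal (g (x - t * Real.sqrt (1 - y ^ 2)) * y ^ b) with hBdef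
  set W : ℝ → ℝ≥0∞ :=
    fun y => ENNReal.ofReal (y ^ c * (Real.sqrt (1 - y ^ 2))⁻¹) with hWdef
  have mA : Measurable A := by
    apply Measurable.ennreal_ofReal; fun_prop
  have mB : Measurable B := by
    apply Measurable.ennreal_ofReal; fun_prop
  have mW : Measurable W := by
    apply Measurable.ennreal_ofReal; fun_prop
  -- Step 1 : rewrite the integrand as A * (B * W)
  have hsplit : (∫⁻ y in Set.Ioc (0 : ℝ) r,
      ENNReal.ofReal (f (x - t * y) * g (x - t * Real.sqrt (1 - y ^ 2)) *
        (Real.sqrt (1 - y ^ 2))⁻¹))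
      = ∫⁻ y in Set.Ioc (0 : ℝ) r, A y * (B y * W y) := by
    refine setLIntegral_congr_fun measurableSet_Ioc (fun y hy => ?_)
    have hy0 : 0 < y := hy.1
    have h1 : y ^ a * (y ^ b * y ^ c) = 1 := by
      rw [← Real.rpow_add hy0, ← Real.rpow_add hy0]
      have h2 : a + (b + c) = 0 := by rw [hadef, hbdef, hcdef]; ring
      rw [h2, Real.rpow_zero]
    have hprod : f (x - t * y) * g (x - t * Real.sqrt (1 - y ^ 2)) *
        (Real.sqrt (1 - y ^ 2))⁻¹
        = (f (x - t * y) * y ^ a) * ((g (x - t * Real.sqrt (1 - y ^ 2)) * y ^ b) *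
            (y ^ c * (Real.sqrt (1 - y ^ 2))⁻¹)) := by
      linear_combination (f (x - t * y) * g (x - t * Real.sqrt (1 - y ^ 2)) *
        (Real.sqrt (1 - y ^ 2))⁻¹) * h1.symm
    rw [hprod,
      ENNReal.ofReal_mul (mul_nonneg (hf0 _) (Real.rpow_nonneg hy0.le _)),
      ENNReal.ofReal_mul (mul_nonneg (hg0 _) (Real.rpow_nonneg hy0.le _))]
  -- Step 2 : Hölder twice
  have conj22 : Real.HolderConjugate 2 2 := Real.HolderConjugate.two_two
  have hH1 : (∫⁻ y in Set.Ioc (0 : ℝ) r, A y * (B y * W y)) ≤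
      (∫⁻ y in Set.Ioc (0 : ℝ) r, A y ^ (2:ℝ)) ^ (1/2 : ℝ) *
      (∫⁻ y in Set.Ioc (0 : ℝ) r, (B y * W y) ^ (2:ℝ)) ^ (1/2 : ℝ) :=
    ENNReal.lintegral_mul_le_Lp_mul_Lq _ conj22 mA.aemeasurable
      (mB.mul mW).aemeasurable
  have hBW : (∫⁻ y in Set.Ioc (0 : ℝ) r, (B y * W y) ^ (2:ℝ))
      = ∫⁻ y in Set.Ioc (0 : ℝ) r, (fun y => B y ^ (2:ℝ)) y * (fun y => W y ^ (2:ℝ)) y := by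
    refine lintegral_congr fun y => ?_
    exact ENNReal.mul_rpow_of_nonneg _ _ (by norm_num)
  have hH2 : (∫⁻ y in Set.Ioc (0 : ℝ) r,
        (fun y => B y ^ (2:ℝ)) y * (fun y => W y ^ (2:ℝ)) y) ≤
      (∫⁻ y in Set.Ioc (0 : ℝ) r, (B y ^ (2:ℝ)) ^ q) ^ (1/q) *
      (∫⁻ y in Set.Ioc (0 : ℝ) r, (W y ^ (2:ℝ)) ^ q') ^ (1/q') :=
    ENNReal.lintegral_mul_le_Lp_mul_Lq _ hconj
      (mB.aemeasurable.pow_const _) (mW.aemeasurable.pow_const _)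
  have hYeq : (∫⁻ y in Set.Ioc (0 : ℝ) r, (B y ^ (2:ℝ)) ^ q)
      = ∫⁻ y in Set.Ioc (0 : ℝ) r, B y ^ (2*q) :=
    lintegral_congr fun y => by rw [← ENNReal.rpow_mul]
  have hZeq : (∫⁻ y in Set.Ioc (0 : ℝ) r, (W y ^ (2:ℝ)) ^ q')
      = ∫⁻ y in Set.Ioc (0 : ℝ) r, W y ^ (2*q') :=
    lintegral_congr fun y => by rw [← ENNReal.rpow_mul]
  -- Step 3 : identify ∫ A² with the statement's f-integral
  have hX : (∫⁻ y in Set.Ioc (0 : ℝ) r, A y ^ (2:ℝ))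
      = ∫⁻ y in Set.Ioc (0 : ℝ) r,
          ENNReal.ofReal (f (x - t * y) ^ 2 * y ^ (-1 + ε)) := by
    refine setLIntegral_congr_fun measurableSet_Ioc (fun y hy => ?_)
    have hy0 : 0 < y := hy.1
    simp only [hAdef]
    rw [ENNReal.ofReal_rpow_of_nonneg
      (mul_nonneg (hf0 _) (Real.rpow_nonneg hy0.le _)) (by norm_num : (0:ℝ) ≤ 2)]
    congr 1
    have e1 : (y ^ a) ^ 2 = y ^ (-1 + ε) := by
      rw [← Real.rpow_natCast (y ^ a) 2, ← Real.rpow_mul hy0.le]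
      congr 1
      rw [hadef]; push_cast; ring
    rw [show (2:ℝ) = ((2:ℕ):ℝ) by norm_num, Real.rpow_natCast, mul_pow, e1]
  -- Step 4 : change of variables for ∫ B^{2q}
  have hY : (∫⁻ y in Set.Ioc (0 : ℝ) r, B y ^ (2*q)) ≤
      ∫⁻ z in Set.Ioc r (1:ℝ), ENNReal.ofReal (g (x - t * z) ^ (2 * q)) := by
    have hio : (∫⁻ y in Set.Ioc (0 : ℝ) r, B y ^ (2*q))
        = ∫⁻ y in Set.Ioo (0 : ℝ) r, B y ^ (2*q) :=
      (setLIntegral_congr Ioo_ae_eq_Ioc).symm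
    set φ : ℝ → ℝ := fun z => Real.sqrt (1 - z ^ 2) with hφdef
    set φ' : ℝ → ℝ := fun z => -(z / Real.sqrt (1 - z ^ 2)) with hφ'def
    have hu : ∀ z ∈ Set.Ioo r (1:ℝ), 0 < 1 - z ^ 2 := fun z hz => by
      have h1 := hz.2; have h0 : 0 < z := lt_trans hr0 hz.1; nlinarith
    have hderiv : ∀ z ∈ Set.Ioo r (1:ℝ), HasDerivWithinAt φ (φ' z) (Set.Ioo r 1) z := by
      intro z hz
      have huz := hu z hz
      have h1 : HasDerivAt (fun w : ℝ => 1 - w ^ 2) (-(2 * z)) z := by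
        simpa using ((hasDerivAt_pow 2 z).const_sub 1)
      have h2 : HasDerivAt Real.sqrt (1 / (2 * Real.sqrt (1 - z ^ 2))) (1 - z ^ 2) :=
        Real.hasDerivAt_sqrt huz.ne'
      have h3 := h2.comp z h1
      have hs0 : Real.sqrt (1 - z ^ 2) ≠ 0 := (Real.sqrt_pos.2 huz).ne'
      have h4 : (1 / (2 * Real.sqrt (1 - z ^ 2))) * (-(2 * z)) = φ' z := by
        rw [hφ'def]; field_simp
      rw [← h4]
      exact h3.hasDerivWithinAt
    have hinj : Set.InjOn φ (Set.Ioo r 1) := by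
      intro z1 h1 z2 h2 he
      have h10 : 0 < z1 := lt_trans hr0 h1.1
      have h20 : 0 < z2 := lt_trans hr0 h2.1
      have hsq : z1 ^ 2 = z2 ^ 2 := by
        have e := congrArg (fun w => w ^ 2) he
        simp only [hφdef] at e
        rw [Real.sq_sqrt (hu z1 h1).le, Real.sq_sqrt (hu z2 h2).le] at e
        linarith
      rw [← Real.sqrt_sq h10.le, hsq, Real.sqrt_sq h20.le]
    have himg : φ '' Set.Ioo r 1 = Set.Ioo (0:ℝ) r := by
      ext y
      simp only [Set.mem_image, Set.mem_Ioo]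
      constructor
      · rintro ⟨z, ⟨hz1, hz2⟩, rfl⟩
        have h0 : 0 < z := lt_trans hr0 hz1
        have huz : 0 < 1 - z ^ 2 := by nlinarith
        constructor
        · exact Real.sqrt_pos.2 huz
        · have hrr : r = Real.sqrt (r ^ 2) := (Real.sqrt_sq hr0.le).symm
          rw [hrr]
          apply Real.sqrt_lt_sqrt huz.le
          nlinarith
      · rintro ⟨hy1, hy2⟩
        have hyy : y ^ 2 < 1 / 2 := by nlinarith
        have huy : 0 < 1 - y ^ 2 := by nlinarith
        refine ⟨Real.sqrt (1 - y ^ 2), ⟨?_, ?_⟩, ?_⟩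
        · have hrr : r = Real.sqrt (r ^ 2) := (Real.sqrt_sq hr0.le).symm
          rw [hrr]
          apply Real.sqrt_lt_sqrt (by nlinarith)
          nlinarith
        · have h5 := Real.sqrt_lt_sqrt huy.le (show 1 - y ^ 2 < 1 by nlinarith)
          rwa [Real.sqrt_one] at h5
        · simp only [hφdef]
          rw [Real.sq_sqrt huy.le, show 1 - (1 - y ^ 2) = y ^ 2 by ring,
            Real.sqrt_sq hy1.le]
    have hcov : (∫⁻ y in Set.Ioo (0 : ℝ) r, B y ^ (2*q))
        = ∫⁻ z in Set.Ioo r (1:ℝ),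
            ENNReal.ofReal |φ' z| * (B (φ z) ^ (2*q)) := by
      rw [← himg]
      exact lintegral_image_eq_lintegral_abs_deriv_mul' measurableSet_Ioo hderiv hinj
        (fun y => B y ^ (2*q))
    have hpt : ∀ z ∈ Set.Ioo r (1:ℝ),
        ENNReal.ofReal |φ' z| * (B (φ z) ^ (2*q)) ≤
          ENNReal.ofReal (g (x - t * z) ^ (2 * q)) := by
      intro z hz
      have h0 : 0 < z := lt_trans hr0 hz.1
      have huz : 0 < 1 - z ^ 2 := hu z hz
      have hsz : 0 < Real.sqrt (1 - z ^ 2) := Real.sqrt_pos.2 huz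
      have hφz : Real.sqrt (1 - (φ z) ^ 2) = z := by
        simp only [hφdef]
        rw [Real.sq_sqrt huz.le, show 1 - (1 - z ^ 2) = z ^ 2 by ring,
          Real.sqrt_sq h0.le]
      have habs : |φ' z| = z / Real.sqrt (1 - z ^ 2) := by
        simp only [hφ'def]
        rw [abs_neg, abs_of_nonneg (div_nonneg h0.le hsz.le)]
      have hBφ : B (φ z) ^ (2*q)
          = ENNReal.ofReal (g (x - t * z) ^ (2*q) * Real.sqrt (1 - z ^ 2)) := by
        simp only [hBdef]
        rw [hφz]
        rw [ENNReal.ofReal_rpow_of_nonneg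
          (mul_nonneg (hg0 _) (Real.rpow_nonneg (Real.sqrt_nonneg _) _)) h2q]
        congr 1
        rw [Real.mul_rpow (hg0 _) (Real.rpow_nonneg (Real.sqrt_nonneg _) _)]
        congr 1
        rw [← Real.rpow_mul (Real.sqrt_nonneg _)]
        rw [hbdef, show 1 / (2*q) * (2*q) = 1 by field_simp, Real.rpow_one]
      rw [hBφ, habs, ← ENNReal.ofReal_mul (div_nonneg h0.le hsz.le)]
      apply ENNReal.ofReal_le_ofReal
      have heq : z / Real.sqrt (1 - z ^ 2) *
          (g (x - t * z) ^ (2*q) * Real.sqrt (1 - z ^ 2))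
          = g (x - t * z) ^ (2*q) * z := by
        field_simp
      rw [heq]
      exact mul_le_of_le_one_right (Real.rpow_nonneg (hg0 _) _) hz.2.le
    calc (∫⁻ y in Set.Ioc (0 : ℝ) r, B y ^ (2*q))
        = ∫⁻ z in Set.Ioo r (1:ℝ), ENNReal.ofReal |φ' z| * (B (φ z) ^ (2*q)) := by
          rw [hio, hcov]
      _ ≤ ∫⁻ z in Set.Ioo r (1:ℝ), ENNReal.ofReal (g (x - t * z) ^ (2 * q)) :=
          setLIntegral_mono' measurableSet_Ioo hpt
      _ ≤ ∫⁻ z in Set.Ioc r (1:ℝ), ENNReal.ofReal (g (x - t * z) ^ (2 * q)) :=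
          lintegral_mono_set Ioo_subset_Ioc_self
  -- Step 5 : bound ∫ W^{2q'} by a constant
  have hc2q' : c * (2 * q') = 1 - ε * q' := by
    rw [hcdef, hq']; field_simp; ring
  have hZ : (∫⁻ y in Set.Ioc (0 : ℝ) r, W y ^ (2*q')) ≤
      ENNReal.ofReal ((2:ℝ) ^ q' / (2 - ε * q')) := by
    have hpt : ∀ y ∈ Set.Ioc (0 : ℝ) r, W y ^ (2*q') ≤
        ENNReal.ofReal ((2:ℝ) ^ q' * y ^ (1 - ε * q')) := by
      intro y hy
      have hy0 : 0 < y := hy.1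
      have huy : (1:ℝ)/2 ≤ 1 - y ^ 2 := by nlinarith [hy.2, hrsq]
      have huy0 : 0 < 1 - y ^ 2 := by linarith
      have hW1 : W y ^ (2*q')
          = ENNReal.ofReal (y ^ (1 - ε * q') * (1 - y ^ 2) ^ (-q')) := by
        simp only [hWdef]
        rw [ENNReal.ofReal_rpow_of_nonneg
          (mul_nonneg (Real.rpow_nonneg hy0.le _)
            (inv_nonneg.2 (Real.sqrt_nonneg _))) h2q']
        congr 1
        rw [Real.mul_rpow (Real.rpow_nonneg hy0.le _)
          (inv_nonneg.2 (Real.sqrt_nonneg _))]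
        congr 1
        · rw [← Real.rpow_mul hy0.le, hc2q']
        · rw [Real.sqrt_eq_rpow, ← Real.rpow_neg huy0.le, ← Real.rpow_mul huy0.le]
          congr 1
          ring
      rw [hW1]
      apply ENNReal.ofReal_le_ofReal
      rw [mul_comm ((2:ℝ) ^ q') _]
      apply mul_le_mul_of_nonneg_left _ (Real.rpow_nonneg hy0.le _)
      calc (1 - y ^ 2) ^ (-q') ≤ ((1:ℝ)/2) ^ (-q') :=
            Real.rpow_le_rpow_of_nonpos (by norm_num) huy (by linarith)
        _ = (2:ℝ) ^ q' := by
            rw [one_div, Real.inv_rpow (by norm_num), Real.rpow_neg (by norm_num),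
              inv_inv]
    have hint : (∫⁻ y in Set.Ioc (0 : ℝ) r,
        ENNReal.ofReal ((2:ℝ) ^ q' * y ^ (1 - ε * q'))) ≤
        ENNReal.ofReal ((2:ℝ) ^ q' / (2 - ε * q')) := by
      have hexp : (-1:ℝ) < 1 - ε * q' := by linarith
      have hIcc : IntegrableOn (fun y : ℝ => (2:ℝ) ^ q' * y ^ (1 - ε * q'))
          (Set.Ioc (0:ℝ) r) := by
        have h5 := (intervalIntegral.intervalIntegrable_rpow' (a := 0) (b := r) hexp).const_mul ((2:ℝ) ^ q')
        rwa [intervalIntegrable_iff_integrableOn_Ioc_of_le hr0.le] at h5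
      rw [← ofReal_integral_eq_lintegral_ofReal hIcc
        ((ae_restrict_iff' measurableSet_Ioc).2 (ae_of_all _ fun y hy =>
          mul_nonneg (Real.rpow_nonneg (by norm_num) _)
            (Real.rpow_nonneg hy.1.le _)))]
      apply ENNReal.ofReal_le_ofReal
      rw [← intervalIntegral.integral_of_le hr0.le,
        intervalIntegral.integral_const_mul, integral_rpow (Or.inl hexp),
        Real.zero_rpow (by linarith : (1 - ε * q') + 1 ≠ 0), sub_zero,
        show (1 - ε * q') + 1 = 2 - ε * q' by ring,
        div_eq_mul_inv ((2:ℝ) ^ q') (2 - ε * q')]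
      have hfin : r ^ (2 - ε * q') ≤ 1 := Real.rpow_le_one hr0.le hr1 h2εq.le
      have h6 : r ^ (2 - ε * q') / (2 - ε * q') ≤ (2 - ε * q')⁻¹ := by
        rw [div_eq_mul_inv]
        exact mul_le_of_le_one_left (inv_nonneg.2 h2εq.le) hfin
      exact mul_le_mul_of_nonneg_left h6 (Real.rpow_nonneg (by norm_num) _)
    calc (∫⁻ y in Set.Ioc (0 : ℝ) r, W y ^ (2*q'))
        ≤ ∫⁻ y in Set.Ioc (0 : ℝ) r,
            ENNReal.ofReal ((2:ℝ) ^ q' * y ^ (1 - ε * q')) :=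
          setLIntegral_mono' measurableSet_Ioc hpt
      _ ≤ _ := hint
  -- Step 6 : assemble
  have e1 : (∫⁻ y in Set.Ioc (0 : ℝ) r, A y ^ (2:ℝ)) ^ (1/2 : ℝ) ≤ F := by
    rw [hX, hFdef]
    exact le_iSup₂ (f := fun (t : ℝ) (_ : 0 < t) =>
      (∫⁻ y in Set.Ioc (0 : ℝ) r,
        ENNReal.ofReal (f (x - t * y) ^ 2 * y ^ (-1 + ε))) ^ (1 / 2 : ℝ)) t ht
  have e2 : (∫⁻ y in Set.Ioc (0 : ℝ) r, B y ^ (2*q)) ^ (1/(2*q)) ≤ G := by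
    refine le_trans (ENNReal.rpow_le_rpow hY h12q) ?_
    rw [hGdef]
    exact le_iSup₂ (f := fun (t : ℝ) (_ : 0 < t) =>
      (∫⁻ z in Set.Ioc r (1:ℝ),
        ENNReal.ofReal (g (x - t * z) ^ (2 * q))) ^ (1 / (2 * q))) t ht
  have e3 : (∫⁻ y in Set.Ioc (0 : ℝ) r, W y ^ (2*q')) ^ (1/(2*q')) ≤
      ENNReal.ofReal C := by
    refine le_trans (ENNReal.rpow_le_rpow hZ h12q') ?_
    rw [hCdef, ENNReal.ofReal_rpow_of_nonneg hD0 h12q']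
  have hsqsplit : ((∫⁻ y in Set.Ioc (0 : ℝ) r, B y ^ (2*q)) ^ (1/q) *
        (∫⁻ y in Set.Ioc (0 : ℝ) r, W y ^ (2*q')) ^ (1/q')) ^ (1/2 : ℝ)
      = (∫⁻ y in Set.Ioc (0 : ℝ) r, B y ^ (2*q)) ^ (1/(2*q)) *
        (∫⁻ y in Set.Ioc (0 : ℝ) r, W y ^ (2*q')) ^ (1/(2*q')) := by
    rw [ENNReal.mul_rpow_of_nonneg _ _ (by norm_num : (0:ℝ) ≤ 1/2),
      ← ENNReal.rpow_mul, ← ENNReal.rpow_mul,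
      show (1/q) * (1/2 : ℝ) = 1/(2*q) by ring,
      show (1/q') * (1/2 : ℝ) = 1/(2*q') by ring]
  calc (∫⁻ y in Set.Ioc (0 : ℝ) r,
      ENNReal.ofReal (f (x - t * y) * g (x - t * Real.sqrt (1 - y ^ 2)) *
        (Real.sqrt (1 - y ^ 2))⁻¹))
      = ∫⁻ y in Set.Ioc (0 : ℝ) r, A y * (B y * W y) := hsplit
    _ ≤ (∫⁻ y in Set.Ioc (0 : ℝ) r, A y ^ (2:ℝ)) ^ (1/2 : ℝ) *
        (∫⁻ y in Set.Ioc (0 : ℝ) r, (B y * W y) ^ (2:ℝ)) ^ (1/2 : ℝ) := hH1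
    _ ≤ (∫⁻ y in Set.Ioc (0 : ℝ) r, A y ^ (2:ℝ)) ^ (1/2 : ℝ) *
        ((∫⁻ y in Set.Ioc (0 : ℝ) r, B y ^ (2*q)) ^ (1/q) *
          (∫⁻ y in Set.Ioc (0 : ℝ) r, W y ^ (2*q')) ^ (1/q')) ^ (1/2 : ℝ) := by
        apply mul_le_mul_right
        apply ENNReal.rpow_le_rpow _ (by norm_num : (0:ℝ) ≤ 1/2)
        rw [hBW]
        exact le_trans hH2 (le_of_eq (by rw [hYeq, hZeq]))
    _ = (∫⁻ y in Set.Ioc (0 : ℝ) r, A y ^ (2:ℝ)) ^ (1/2 : ℝ) *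
        ((∫⁻ y in Set.Ioc (0 : ℝ) r, B y ^ (2*q)) ^ (1/(2*q)) *
          (∫⁻ y in Set.Ioc (0 : ℝ) r, W y ^ (2*q')) ^ (1/(2*q'))) := by
        rw [hsqsplit]
    _ ≤ F * (G * ENNReal.ofReal C) :=
        mul_le_mul' e1 (mul_le_mul' e2 e3)
    _ = ENNReal.ofReal C * (F * G) := by ring
end

section
/- Let m ≥ 2. There is a constant c_m > 0, depending only on m, such that for every 0 < δ ≤ 1/2, taking f_1 = ⋯ = f_m = χ_{[−δ,δ]}, one has S^m(f_1,…,f_m)(x) ≥ c_m δ^{m−1} for every x with 1/2 ≤ x ≤ 1. -/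
open MeasureTheory Real Set
open scoped ENNReal NNReal Pointwise

section Aux

lemma abs_coord_le_norm {m : ℕ} (v : EuclideanSpace ℝ (Fin m)) (i : Fin m) : |v i| ≤ ‖v‖ := by
  rw [EuclideanSpace.norm_eq]
  rw [← Real.sqrt_sq_eq_abs]
  apply Real.sqrt_le_sqrt
  have := Finset.single_le_sum (f := fun j => ‖v j‖ ^ 2) (fun j _ => by positivity) (Finset.mem_univ i)
  simpa [Real.norm_eq_abs, sq_abs] using this

lemma norm_le_sqrt_mul {m : ℕ} (v : EuclideanSpace ℝ (Fin m)) (r : ℝ) (hr : 0 ≤ r)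
    (h : ∀ i, |v i| ≤ r) : ‖v‖ ≤ Real.sqrt m * r := by
  rw [EuclideanSpace.norm_eq]
  have h1 : ∑ i, ‖v i‖ ^ 2 ≤ (m : ℝ) * r ^ 2 := by
    calc ∑ i, ‖v i‖ ^ 2 ≤ ∑ _i : Fin m, r ^ 2 := by
          apply Finset.sum_le_sum
          intro i _
          have := h i
          rw [Real.norm_eq_abs]
          nlinarith [abs_nonneg (v i)]
      _ = (m : ℝ) * r ^ 2 := by simp [mul_comm]
  calc Real.sqrt (∑ i, ‖v i‖ ^ 2) ≤ Real.sqrt ((m:ℝ) * r ^ 2) := Real.sqrt_le_sqrt h1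
    _ = Real.sqrt m * r := by
        rw [Real.sqrt_mul (Nat.cast_nonneg m), Real.sqrt_sq hr]


lemma exists_onb {m : ℕ} (hm : 2 ≤ m) :
    ∃ b : OrthonormalBasis (Fin m) ℝ (EuclideanSpace ℝ (Fin m)),
      b ⟨0, by omega⟩ = (WithLp.toLp 2 (fun _ => (Real.sqrt m)⁻¹) : EuclideanSpace ℝ (Fin m)) := by
  have hm0 : (0:ℝ) < m := by positivity
  set u : EuclideanSpace ℝ (Fin m) := WithLp.toLp 2 (fun _ => (Real.sqrt m)⁻¹) with hu
  have hnorm : ‖u‖ = 1 := by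
    rw [EuclideanSpace.norm_eq]
    have : ∀ i : Fin m, ‖u i‖ ^ 2 = (m:ℝ)⁻¹ := by
      intro i
      simp only [hu, Real.norm_eq_abs]
      rw [sq_abs, ← Real.sqrt_inv, Real.sq_sqrt (by positivity)]
    rw [Finset.sum_congr rfl (fun i _ => this i)]
    simp only [Finset.sum_const, Finset.card_univ, Fintype.card_fin, nsmul_eq_mul]
    rw [mul_inv_cancel₀ (by positivity), Real.sqrt_one]
  have horth : Orthonormal ℝ (Set.restrict {(⟨0, by omega⟩ : Fin m)} (fun _ : Fin m => u)) := by
    rw [orthonormal_iff_ite]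
    intro i j
    have : i = j := Subsingleton.elim i j
    subst this
    simp only [Set.restrict_apply, if_pos rfl]
    change inner ℝ u u = _
    rw [show (inner ℝ (u) (u) : ℝ) = 1 from by rw [real_inner_self_eq_norm_sq, hnorm]; norm_num]
    simp
  obtain ⟨b, hb⟩ := horth.exists_orthonormalBasis_extension_of_card_eq
    (by simp [finrank_euclideanSpace]) 
  exact ⟨b, hb _ rfl⟩

set_option maxHeartbeats 1000000 in
lemma box_props {m : ℕ} (hm : 2 ≤ m) (b : OrthonormalBasis (Fin m) ℝ (EuclideanSpace ℝ (Fin m)))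
    (hb : b ⟨0, by omega⟩ = (WithLp.toLp 2 (fun _ => (Real.sqrt m)⁻¹) : EuclideanSpace ℝ (Fin m)))
    (δ : ℝ) (hδ0 : 0 < δ) (hδ : δ ≤ 1/2)
    (z : EuclideanSpace ℝ (Fin m))
    (hz0 : (b.repr z) ⟨0, by omega⟩ ∈ Icc (4⁻¹:ℝ) 2⁻¹)
    (hzj : ∀ j, j ≠ ⟨0, by omega⟩ → (b.repr z) j ∈ Icc (-(δ/(16*m))) (δ/(16*m))) :
    0 < ‖z‖ ∧ ‖z‖ < 1 ∧
      ∀ i, |‖z‖⁻¹ * z i - (Real.sqrt m)⁻¹| ≤ δ * (Real.sqrt m)⁻¹ := by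
  have hm0 : (0:ℝ) < m := by positivity
  set sm := Real.sqrt m with hsm
  have hsmpos : 0 < sm := Real.sqrt_pos.2 hm0
  have hsmsq : sm * sm = m := Real.mul_self_sqrt hm0.le
  have hsm1 : 1 ≤ sm := by
    rw [hsm, show (1:ℝ) = Real.sqrt 1 from (Real.sqrt_one).symm]
    exact Real.sqrt_le_sqrt (by exact_mod_cast by omega)
  set i0 : Fin m := ⟨0, by omega⟩ with hi0
  set w := b.repr z with hw
  set w0 := w i0 with hw0
  set ht : EuclideanSpace ℝ (Fin m) := w - EuclideanSpace.single i0 w0 with hht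
  have habs : ∀ j, |ht j| ≤ δ/(16*m) := by
    intro j
    have hcoordval : ht j = w j - (if j = i0 then w0 else 0) := by
      simp [hht, EuclideanSpace.single_apply]
    by_cases hj : j = i0
    · subst hj; simp only [if_pos rfl] at hcoordval
      rw [hcoordval, if_pos trivial, hw0, sub_self, abs_zero]; positivity
    · rw [hcoordval, if_neg hj, sub_zero]
      have := hzj j hj
      rw [abs_le]; exact ⟨this.1, this.2⟩
  have hnt : ‖ht‖ ≤ sm * (δ/(16*m)) := norm_le_sqrt_mul ht _ (by positivity) habs
  have hrval : sm * (δ/(16*m)) = δ / (16*sm) := by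
    field_simp
    nlinarith [hsmsq]
  rw [hrval] at hnt
  have hsingle : EuclideanSpace.single i0 w0 = w0 • EuclideanSpace.single i0 (1:ℝ) := by
    ext j
    by_cases hj : j = i0 <;> simp [EuclideanSpace.single_apply, hj]
  have hzsub : z - w0 • b i0 = b.repr.symm ht := by
    rw [hht, map_sub, b.repr.symm_apply_apply, hsingle, _root_.map_smul,
      OrthonormalBasis.repr_symm_single]
  have hnz : ‖z - w0 • b i0‖ ≤ δ/(16*sm) := by
    rw [hzsub, LinearIsometryEquiv.norm_map]; exact hnt
  have hbnorm : ‖b i0‖ = 1 := b.orthonormal.1 i0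
  have hw0pos : (4⁻¹:ℝ) ≤ w0 := hz0.1
  have hw0le : w0 ≤ 2⁻¹ := hz0.2
  have hn0 : |‖z‖ - w0| ≤ δ/(16*sm) := by
    have h1 : ‖w0 • b i0‖ = w0 := by
      rw [norm_smul, hbnorm, mul_one, Real.norm_eq_abs, abs_of_pos (by linarith)]
    calc |‖z‖ - w0| = |‖z‖ - ‖w0 • b i0‖| := by rw [h1]
      _ ≤ ‖z - w0 • b i0‖ := abs_norm_sub_norm_le _ _
      _ ≤ δ/(16*sm) := hnz
  have hsmall : δ/(16*sm) ≤ 1/32 := by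
    rw [div_le_iff₀ (by positivity)]
    nlinarith
  have hzlow : (7:ℝ)/32 ≤ ‖z‖ := by
    have := abs_le.1 hn0
    linarith
  have hzhigh : ‖z‖ < 1 := by
    have := abs_le.1 hn0
    linarith
  have hzpos : 0 < ‖z‖ := by linarith
  refine ⟨hzpos, hzhigh, fun i => ?_⟩
  have hcoord : |z i - w0 * sm⁻¹| ≤ δ/(16*sm) := by
    have h1 : (z - w0 • b i0) i = z i - w0 * sm⁻¹ := by
      have : (b i0) i = sm⁻¹ := by rw [hb]
      simp [this]
    calc |z i - w0 * sm⁻¹| = |(z - w0 • b i0) i| := by rw [h1]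
      _ ≤ ‖z - w0 • b i0‖ := abs_coord_le_norm _ _
      _ ≤ δ/(16*sm) := hnz
  have hkey : |z i - ‖z‖ * sm⁻¹| ≤ δ/(8*sm) := by
    have h2 : |w0 * sm⁻¹ - ‖z‖ * sm⁻¹| = |w0 - ‖z‖| * sm⁻¹ := by
      rw [← sub_mul, abs_mul, abs_of_pos (by positivity : (0:ℝ) < sm⁻¹)]
    have h3 : |z i - ‖z‖ * sm⁻¹| ≤ |z i - w0 * sm⁻¹| + |w0 * sm⁻¹ - ‖z‖ * sm⁻¹| := by
      have := abs_sub_le (z i) (w0 * sm⁻¹) (‖z‖ * sm⁻¹)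
      linarith
    have h4 : |w0 - ‖z‖| = |‖z‖ - w0| := abs_sub_comm _ _
    have hsi : sm⁻¹ ≤ 1 := by
      rw [inv_le_one_iff₀]; right; exact hsm1
    have hsipos : (0:ℝ) < sm⁻¹ := by positivity
    calc |z i - ‖z‖ * sm⁻¹| ≤ |z i - w0 * sm⁻¹| + |w0 - ‖z‖| * sm⁻¹ := by rw [← h2]; exact h3
      _ ≤ δ/(16*sm) + (δ/(16*sm)) * sm⁻¹ := by
          apply add_le_add hcoord
          rw [h4]
          apply mul_le_mul_of_nonneg_right hn0 hsipos.le
      _ ≤ δ/(16*sm) + δ/(16*sm) := by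
          have : (0:ℝ) ≤ δ/(16*sm) := by positivity
          nlinarith
      _ = δ/(8*sm) := by ring
  have hrw : ‖z‖⁻¹ * z i - sm⁻¹ = (z i - ‖z‖ * sm⁻¹)/‖z‖ := by
    rw [sub_div, mul_comm (‖z‖) (sm⁻¹), mul_div_assoc, div_self (ne_of_gt hzpos), mul_one,
      inv_mul_eq_div]
  rw [hrw, abs_div, abs_of_pos hzpos, div_le_iff₀ hzpos]
  have h5 : δ * sm⁻¹ * ‖z‖ ≥ δ * sm⁻¹ * (7/32) := by
    apply mul_le_mul_of_nonneg_left hzlow (by positivity)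
  have h6 : δ/(8*sm) ≤ δ * sm⁻¹ * (7/32) := by
    rw [div_le_iff₀ (by positivity)]
    have : sm * sm⁻¹ = 1 := mul_inv_cancel₀ (ne_of_gt hsmpos)
    nlinarith
  linarith

lemma cap_measure_lower {m : ℕ} (hm : 2 ≤ m) (b : OrthonormalBasis (Fin m) ℝ (EuclideanSpace ℝ (Fin m)))
    (hb : b ⟨0, by omega⟩ = (WithLp.toLp 2 (fun _ => (Real.sqrt m)⁻¹) : EuclideanSpace ℝ (Fin m)))
    (δ : ℝ) (hδ0 : 0 < δ) (hδ : δ ≤ 1/2) :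
    ENNReal.ofReal (4⁻¹ * (δ/(8*m))^(m-1)) ≤
      volume (Ioo (0:ℝ) 1 •
        (Subtype.val '' {y : Metric.sphere (0 : EuclideanSpace ℝ (Fin m)) 1 |
          ∀ i, |(y : EuclideanSpace ℝ (Fin m)) i - (Real.sqrt m)⁻¹| ≤ δ * (Real.sqrt m)⁻¹})) := by
  set i0 : Fin m := ⟨0, by omega⟩ with hi0
  set I : Fin m → Set ℝ := fun j => if j = i0 then Icc (4⁻¹:ℝ) 2⁻¹ else Icc (-(δ/(16*m))) (δ/(16*m)) with hI
  set Bbox : Set (Fin m → ℝ) := Set.univ.pi I with hBbox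
  have hBboxMeas : MeasurableSet Bbox := MeasurableSet.univ_pi (fun j => by
    by_cases hj : j = i0 <;> simp [hI, hj, measurableSet_Icc])
  set e := (MeasurableEquiv.toLp 2 (Fin m → ℝ)).symm with he
  set B' : Set (EuclideanSpace ℝ (Fin m)) := e ⁻¹' Bbox with hB'
  have hB'Meas : MeasurableSet B' := e.measurable hBboxMeas
  set D : Set (EuclideanSpace ℝ (Fin m)) := b.repr ⁻¹' B' with hD
  -- volume computations
  have hvolBbox : volume Bbox = ENNReal.ofReal (4⁻¹) * ENNReal.ofReal (δ/(8*m)) ^ (m-1) := by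
    rw [hBbox, volume_pi_pi]
    rw [← Finset.mul_prod_erase Finset.univ _ (Finset.mem_univ i0)]
    have h1 : volume (I i0) = ENNReal.ofReal (4⁻¹) := by
      simp [hI, Real.volume_Icc]
      norm_num
      rw [one_div, ENNReal.ofReal_inv_of_pos (by norm_num)]; norm_num
    have h2 : ∀ j ∈ Finset.univ.erase i0, volume (I j) = ENNReal.ofReal (δ/(8*m)) := by
      intro j hj
      have hj' := Finset.ne_of_mem_erase hj
      simp only [hI, if_neg hj', Real.volume_Icc]
      congr 1
      ring
    rw [Finset.prod_congr rfl h2, h1, Finset.prod_const]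
    congr 2
    rw [Finset.card_erase_of_mem (Finset.mem_univ i0), Finset.card_univ, Fintype.card_fin]
  have hvolB' : volume B' = volume Bbox :=
    (EuclideanSpace.volume_preserving_symm_measurableEquiv_toLp (Fin m)).measure_preimage
      hBboxMeas.nullMeasurableSet
  have hvolD : volume D = volume B' :=
    b.measurePreserving_repr.measure_preimage hB'Meas.nullMeasurableSet
  -- inclusion
  have hincl : D ⊆ Ioo (0:ℝ) 1 •
      (Subtype.val '' {y : Metric.sphere (0 : EuclideanSpace ℝ (Fin m)) 1 |
        ∀ i, |(y : EuclideanSpace ℝ (Fin m)) i - (Real.sqrt m)⁻¹| ≤ δ * (Real.sqrt m)⁻¹}) := by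
    intro z hz
    have hmem : ∀ j, (e (b.repr z)) j ∈ I j := by
      intro j
      exact (Set.mem_univ_pi.1 hz) j
    have heq : ∀ j, e (b.repr z) j = b.repr z j := fun j => rfl
    have hz0 : (b.repr z) i0 ∈ Icc (4⁻¹:ℝ) 2⁻¹ := by
      have := hmem i0; rw [heq] at this; simpa [hI] using this
    have hzj : ∀ j, j ≠ i0 → (b.repr z) j ∈ Icc (-(δ/(16*m))) (δ/(16*m)) := by
      intro j hj
      have := hmem j; rw [heq] at this; simpa [hI, if_neg hj] using this
    obtain ⟨hzpos, hzlt, hco⟩ := box_props hm b hb δ hδ0 hδ z hz0 hzj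
    have hynorm : ‖(‖z‖⁻¹ • z : EuclideanSpace ℝ (Fin m))‖ = 1 := by
      rw [norm_smul, norm_inv, norm_norm, inv_mul_cancel₀ (ne_of_gt hzpos)]
    refine Set.mem_smul.2 ⟨‖z‖, ⟨hzpos, hzlt⟩, ‖z‖⁻¹ • z, ?_, ?_⟩
    · refine ⟨⟨‖z‖⁻¹ • z, by simpa [Metric.mem_sphere] using hynorm⟩, ?_, rfl⟩
      intro i
      have := hco i
      simpa using this
    · simp [smul_smul, mul_inv_cancel₀ (ne_of_gt hzpos)]
  calc ENNReal.ofReal (4⁻¹ * (δ/(8*m))^(m-1))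
      = volume D := by
        rw [hvolD, hvolB', hvolBbox, ENNReal.ofReal_mul (by norm_num), ENNReal.ofReal_pow (by positivity)]
    _ ≤ _ := measure_mono hincl

end Aux

/-- with `f₁ = ⋯ = f_m = χ_{[-δ,δ]}`, one has
`S^m(f₁,…,f_m)(x) ≳ δ^{m-1}` for `1/2 ≤ x ≤ 1`. -/
theorem concentrated_lower_bound_a (m : ℕ) (hm : 2 ≤ m) :
    ∃ c : ℝ, 0 < c ∧ ∀ δ : ℝ, 0 < δ → δ ≤ 1 / 2 →
      ∀ x : ℝ, 1 / 2 ≤ x → x ≤ 1 →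
        ENNReal.ofReal (c * δ ^ (m - 1)) ≤
          Sm m (fun _ => Set.indicator (Set.Icc (-δ) δ) 1) x := by
  obtain ⟨b, hb⟩ := exists_onb hm
  have hm0 : (0:ℝ) < m := by positivity
  set sm := Real.sqrt m with hsm
  have hsmpos : 0 < sm := Real.sqrt_pos.2 hm0
  have hsmsq : sm * sm = m := Real.mul_self_sqrt hm0.le
  set V := volume (Metric.ball (0 : EuclideanSpace ℝ (Fin m)) 1) with hV
  have hV0 : V ≠ 0 := (Metric.measure_ball_pos volume 0 one_pos).ne'
  have hVtop : V ≠ ⊤ := measure_ball_lt_top.ne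
  have hVR : 0 < V.toReal := ENNReal.toReal_pos hV0 hVtop
  refine ⟨V.toReal⁻¹ * (4⁻¹ * ((8*m:ℝ))⁻¹ ^ (m-1)), by positivity, ?_⟩
  intro δ hδ0 hδ x hx1 hx2
  set A : Set (Metric.sphere (0 : EuclideanSpace ℝ (Fin m)) 1) :=
    {y | ∀ i, |(y : EuclideanSpace ℝ (Fin m)) i - sm⁻¹| ≤ δ * sm⁻¹} with hA
  have hAmeas : MeasurableSet A := by
    have : A = ⋂ i, {y : Metric.sphere (0 : EuclideanSpace ℝ (Fin m)) 1 |
        |(y : EuclideanSpace ℝ (Fin m)) i - sm⁻¹| ≤ δ * sm⁻¹} := by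
      ext y; simp [hA, Set.mem_iInter]
    rw [this]
    refine MeasurableSet.iInter fun i => ?_
    refine IsClosed.measurableSet (isClosed_le ?_ continuous_const)
    exact (((EuclideanSpace.proj i).continuous.comp continuous_subtype_val).sub
      continuous_const).abs
  -- the spherical measure of A
  have hT : (volume : Measure (EuclideanSpace ℝ (Fin m))).toSphere Set.univ
      = (m : ℝ≥0∞) * V := by
    rw [Measure.toSphere_apply_univ]
    congr
    simp [finrank_euclideanSpace_fin]
  have htoSph : ENNReal.ofReal (4⁻¹ * (δ/(8*m))^(m-1)) * (m : ℝ≥0∞) ≤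
      (volume : Measure (EuclideanSpace ℝ (Fin m))).toSphere A := by
    rw [Measure.toSphere_apply' _ hAmeas]
    rw [mul_comm]
    have hdim : ((Module.finrank ℝ (EuclideanSpace ℝ (Fin m))) : ℝ≥0∞) = (m : ℝ≥0∞) := by
      simp [finrank_euclideanSpace_fin]
    gcongr
    · simp [finrank_euclideanSpace_fin]
    · exact cap_measure_lower hm b hb δ hδ0 hδ
  have hsphA : ENNReal.ofReal (V.toReal⁻¹ * (4⁻¹ * (δ/(8*m))^(m-1))) ≤ sphMeasure m A := by
    rw [sphMeasure, Measure.smul_apply, smul_eq_mul, hT]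
    have hm' : (m : ℝ≥0∞) ≠ 0 := by exact_mod_cast (by omega : m ≠ 0)
    have hmtop : (m : ℝ≥0∞) ≠ ⊤ := ENNReal.natCast_ne_top m
    rw [ENNReal.mul_inv (Or.inl hm') (Or.inl hmtop)]
    rw [ENNReal.ofReal_mul (by positivity)]
    have hVinv : ENNReal.ofReal V.toReal⁻¹ = V⁻¹ := by
      rw [ENNReal.ofReal_inv_of_pos hVR, ENNReal.ofReal_toReal hVtop]
    rw [hVinv]
    calc V⁻¹ * ENNReal.ofReal (4⁻¹ * (δ/(8*m))^(m-1))
        ≤ V⁻¹ * (((m:ℝ≥0∞))⁻¹ * ((volume : Measure (EuclideanSpace ℝ (Fin m))).toSphere A)) := by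
          gcongr
          rw [← ENNReal.le_div_iff_mul_le (Or.inl hm') (Or.inl hmtop), ENNReal.div_eq_inv_mul] at htoSph
          · exact htoSph
      _ = (m:ℝ≥0∞)⁻¹ * V⁻¹ * ((volume : Measure (EuclideanSpace ℝ (Fin m))).toSphere A) := by
          ring
  -- the pointwise bound
  set t := x * sm with hts
  have ht : 0 < t := by positivity
  have hpt : ∀ y ∈ A,
      (∏ i, ENNReal.ofReal |Set.indicator (Set.Icc (-δ) δ) (1 : ℝ → ℝ)
        (x - t * (y : EuclideanSpace ℝ (Fin m)) i)|) = 1 := by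
    intro y hy
    have h1 : ∀ i, Set.indicator (Set.Icc (-δ) δ) (1 : ℝ → ℝ)
        (x - t * (y : EuclideanSpace ℝ (Fin m)) i) = 1 := by
      intro i
      apply Set.indicator_of_mem
      have hyi := hy i
      set yi := (y : EuclideanSpace ℝ (Fin m)) i
      have heq : x - t * yi = x * sm * (sm⁻¹ - yi) := by
        rw [hts]
        have : x * sm * sm⁻¹ = x := by
          rw [mul_assoc, mul_inv_cancel₀ (ne_of_gt hsmpos), mul_one]
        rw [mul_sub, this]
      have habs : |x - t * yi| ≤ δ := by
        rw [heq, abs_mul, abs_of_pos (by positivity : (0:ℝ) < x * sm)]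
        calc x * sm * |sm⁻¹ - yi| ≤ x * sm * (δ * sm⁻¹) := by
              gcongr
              rw [abs_sub_comm] at hyi; exact hyi
          _ = x * δ * (sm * sm⁻¹) := by ring
          _ = x * δ := by rw [mul_inv_cancel₀ (ne_of_gt hsmpos), mul_one]
          _ ≤ δ := by nlinarith
      have := abs_le.1 habs
      exact ⟨by linarith, this.2⟩
    calc (∏ i, ENNReal.ofReal |Set.indicator (Set.Icc (-δ) δ) (1 : ℝ → ℝ)
          (x - t * (y : EuclideanSpace ℝ (Fin m)) i)|)
        = ∏ _i : Fin m, 1 := by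
          apply Finset.prod_congr rfl
          intro i _
          rw [h1 i]
          norm_num
      _ = 1 := Finset.prod_const_one
  -- combine
  have havg : sphMeasure m A ≤ sphAvg m (fun _ => Set.indicator (Set.Icc (-δ) δ) 1) t x := by
    rw [sphAvg, ← lintegral_indicator_one hAmeas]
    apply lintegral_mono
    intro y
    by_cases hy : y ∈ A
    · simp only [Set.indicator_of_mem hy, Pi.one_apply]
      exact le_of_eq (hpt y hy).symm
    · rw [Set.indicator_of_notMem hy]
      exact zero_le
  have hSm : sphAvg m (fun _ => Set.indicator (Set.Icc (-δ) δ) 1) t x ≤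
      Sm m (fun _ => Set.indicator (Set.Icc (-δ) δ) 1) x := by
    rw [Sm]
    exact le_iSup₂ (f := fun (t : ℝ) (_ : 0 < t) =>
      sphAvg m (fun _ => Set.indicator (Set.Icc (-δ) δ) 1) t x) t ht
  refine le_trans ?_ (le_trans hsphA (le_trans havg hSm))
  apply ENNReal.ofReal_le_ofReal
  apply le_of_eq
  rw [div_pow, div_eq_mul_inv, ← inv_pow]
  ring
end

section
/- Let m ≥ 2. There is a constant c_m > 0, depending only on m, such that for every 0 < δ ≤ 1/2, taking f_1 = χ_{[−10√m, 10√m]} and f_2 = ⋯ = f_m = χ_{[−δ,δ]}, one has S^m(f_1,…,f_m)(x) ≥ c_m δ^{m−3/2} for every x with 1/2 ≤ x ≤ 1. -/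
open MeasureTheory Real Set
open scoped ENNReal NNReal
open scoped Pointwise

section auxiliaryLemmas

noncomputable def shear (k : ℕ) :
    EuclideanSpace ℝ (Fin (k+2)) →ₗ[ℝ] EuclideanSpace ℝ (Fin (k+2)) where
  toFun z := WithLp.toLp 2 (fun i : Fin (k+2) => if (i:ℕ) ≤ 1 then z i else z i + z 1)
  map_add' z w := by
    ext i; by_cases h : (i:ℕ) ≤ 1 <;> simp [h] <;> ring
  map_smul' c z := by
    ext i; by_cases h : (i:ℕ) ≤ 1 <;> simp [h] <;> ring

lemma shear_apply (k : ℕ) (z : EuclideanSpace ℝ (Fin (k+2))) (i : Fin (k+2)) :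
    shear k z i = if (i:ℕ) ≤ 1 then z i else z i + z 1 := rfl


lemma shear_det (k : ℕ) : LinearMap.det (shear k) = 1 := by
  rw [← LinearMap.det_toMatrix (EuclideanSpace.basisFun (Fin (k+2)) ℝ).toBasis]
  rw [Matrix.det_of_lowerTriangular]
  · apply Finset.prod_eq_one
    intro i _
    simp only [LinearMap.toMatrix_apply, OrthonormalBasis.coe_toBasis,
      OrthonormalBasis.coe_toBasis_repr_apply, EuclideanSpace.basisFun_apply,
      EuclideanSpace.basisFun_repr, shear_apply]
    by_cases h : (i:ℕ) ≤ 1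
    · simp [h, EuclideanSpace.single_apply]
    · have h1 : (1 : Fin (k+2)) ≠ i := by
        intro he; apply h; rw [← he]; simp [Fin.val_one]
      simp [h, EuclideanSpace.single_apply, h1]
  · intro i j hij
    have hij2 : (i:ℕ) < (j:ℕ) := Fin.lt_def.1 (OrderDual.toDual_lt_toDual.1 hij)
    have hne : i ≠ j := fun he => by simp [he] at hij2
    simp only [LinearMap.toMatrix_apply, OrthonormalBasis.coe_toBasis,
      OrthonormalBasis.coe_toBasis_repr_apply, EuclideanSpace.basisFun_apply,
      EuclideanSpace.basisFun_repr, shear_apply]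
    by_cases h : (i:ℕ) ≤ 1
    · simp [h, EuclideanSpace.single_apply, hne]
    · have h1 : (1 : Fin (k+2)) ≠ j := by
        intro he
        rw [← he] at hij2
        rw [Fin.val_one] at hij2
        omega
      rw [if_neg h]
      simp [EuclideanSpace.single_apply, hne, h1]

lemma abs_coord_le' {n : ℕ} (z : EuclideanSpace ℝ (Fin n)) (i : Fin n) :
    |z i| ≤ ‖z‖ := by
  rw [EuclideanSpace.norm_eq, ← Real.sqrt_sq_eq_abs]
  apply Real.sqrt_le_sqrt
  simp only [Real.norm_eq_abs, sq_abs]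
  exact Finset.single_le_sum (f := fun j => (z j)^2) (fun j _ => sq_nonneg _) (Finset.mem_univ i)

/-- The box whose shear image sits inside the cone over the spherical band. -/
def Ibox (k : ℕ) (a δ : ℝ) : Fin (k+2) → Set ℝ := fun i =>
  if (i:ℕ) = 0 then Ioo 0 ((a/2) * Real.sqrt δ)
  else if (i:ℕ) = 1 then Ioo (a/2) (3*a/4)
  else Ioo 0 (a*δ/32)

/-- The spherical band. -/
def Aband (k : ℕ) (a δ : ℝ) : Set (Metric.sphere (0 : EuclideanSpace ℝ (Fin (k+2))) 1) :=
  {y | ∀ i : Fin (k+2), (i:ℕ) ≠ 0 →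
    (y : EuclideanSpace ℝ (Fin (k+2))) i ∈ Icc (a*(1-δ)) (a*(1+δ))}

lemma Aband_measurable (k : ℕ) (a δ : ℝ) : MeasurableSet (Aband k a δ) := by
  have hrw : Aband k a δ = ⋂ (i : Fin (k+2)), ⋂ (_ : (i:ℕ) ≠ 0),
      (fun y : Metric.sphere (0 : EuclideanSpace ℝ (Fin (k+2))) 1 =>
        (y : EuclideanSpace ℝ (Fin (k+2))) i) ⁻¹' Icc (a*(1-δ)) (a*(1+δ)) := by
    ext y; simp [Aband, Set.mem_iInter]
  rw [hrw]
  refine MeasurableSet.iInter fun i => MeasurableSet.iInter fun _ => ?_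
  exact (((measurable_pi_apply i).comp
    (MeasurableEquiv.toLp 2 (Fin (k+2) → ℝ)).symm.measurable).comp
    measurable_subtype_coe) measurableSet_Icc

set_option maxHeartbeats 8000000 in
/-- The key geometric inclusion: the sheared box lies in the cone over the band. -/
lemma cone_incl (k : ℕ) {a δ : ℝ} (hδ : 0 < δ) (hδ2 : δ ≤ 1/2)
    (hapos : 0 < a) (ha2' : a^2 * ((k:ℝ)+1) = 1-δ) (ha1 : a ≤ 1) :
    (⇑(shear k)) '' {w | ∀ i, w i ∈ Ibox k a δ i} ⊆
      Ioo (0:ℝ) 1 • (Subtype.val '' Aband k a δ) := by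
  have hk0 : (0:ℝ) ≤ (k:ℝ) := Nat.cast_nonneg k
  have hδ1 : δ ≤ 1 := by linarith
  have he2 : δ^2 ≤ δ/2 := by nlinarith
  have he3 : δ^3 ≤ δ/4 := by nlinarith [he2]
  rintro z' ⟨w, hw, rfl⟩
  set z : EuclideanSpace ℝ (Fin (k+2)) := shear k w with hz
  have hval0 : ((0 : Fin (k+2)) : ℕ) = 0 := Fin.val_zero _
  have hval1 : ((1 : Fin (k+2)) : ℕ) = 1 := Fin.val_one k
  have hw1 : w 1 ∈ Ioo (a/2) (3*a/4) := by
    have h := hw 1; rw [Ibox, hval1] at h; norm_num at h; exact ⟨h.1, h.2⟩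
  have hw0 : w 0 ∈ Ioo 0 ((a/2) * Real.sqrt δ) := by
    have h := hw 0; rwa [Ibox, hval0, if_pos rfl] at h
  set q : ℝ := w 1 with hq
  have hqpos : 0 < q := lt_trans (by positivity) hw1.1
  have hz0 : z 0 = w 0 := by rw [hz, shear_apply, if_pos (by rw [hval0]; norm_num)]
  have hz1 : z 1 = q := by rw [hz, shear_apply, if_pos hval1.le]
  -- coordinatewise bounds
  have hzc : ∀ i : Fin (k+2), (i:ℕ) ≠ 0 → q ≤ z i ∧ z i ≤ q * (1+δ/16) := by
    intro i hi
    by_cases hi1 : (i:ℕ) = 1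
    · have hieq : i = 1 := by apply Fin.ext; rw [hval1, hi1]
      rw [hieq, hz1]
      exact ⟨le_refl q, by nlinarith⟩
    · have hile : ¬ ((i:ℕ) ≤ 1) := by omega
      have hzi : z i = w i + q := by rw [hz, shear_apply, if_neg hile]
      have hwi : w i ∈ Ioo 0 (a*δ/32) := by
        have h := hw i; rwa [Ibox, if_neg hi, if_neg hi1] at h
      rw [hzi]
      constructor
      · nlinarith [hwi.1]
      · nlinarith [hwi.2, hw1.1, hw1.2]
  have hz0b : 0 < z 0 ∧ z 0 ≤ q * Real.sqrt δ := by
    rw [hz0]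
    refine ⟨hw0.1, hw0.2.le.trans ?_⟩
    have : a / 2 ≤ q := hw1.1.le
    nlinarith [Real.sqrt_nonneg δ]
  clear_value z q
  -- sum of squares bounds
  set Q2 : ℝ := ∑ i, (z i)^2 with hQ2
  clear_value Q2
  have hsum : Q2 = (z 0)^2 + ∑ i ∈ Finset.univ.erase 0, (z i)^2 := by
    rw [hQ2]
    exact (Finset.add_sum_erase Finset.univ (fun i => z i ^ 2) (Finset.mem_univ 0)).symm
  have hcard : (Finset.univ.erase (0 : Fin (k+2))).card = k+1 := by
    rw [Finset.card_erase_of_mem (Finset.mem_univ _), Finset.card_univ, Fintype.card_fin]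
    omega
  have hmemne : ∀ i ∈ Finset.univ.erase (0 : Fin (k+2)), (i:ℕ) ≠ 0 := by
    intro i hi
    have : i ≠ 0 := (Finset.mem_erase.1 hi).1
    intro hc; apply this; apply Fin.ext; rw [hval0, hc]
  have hSlow : ((k:ℝ)+1) * q^2 ≤ Q2 := by
    rw [hsum]
    have h1 : ∀ i ∈ Finset.univ.erase (0 : Fin (k+2)), q^2 ≤ (z i)^2 := by
      intro i hi
      exact pow_le_pow_left₀ hqpos.le ((hzc i (hmemne i hi)).1) 2
    have h2 := Finset.sum_le_sum h1
    rw [Finset.sum_const, hcard, nsmul_eq_mul] at h2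
    push_cast at h2
    nlinarith [sq_nonneg (z 0)]
  have hShigh : Q2 ≤ q^2 * (((k:ℝ)+1) * (1+δ/16)^2 + δ) := by
    rw [hsum]
    have h1 : ∀ i ∈ Finset.univ.erase (0 : Fin (k+2)), (z i)^2 ≤ (q*(1+δ/16))^2 := by
      intro i hi
      have hb := hzc i (hmemne i hi)
      have hpos : 0 ≤ z i := le_trans hqpos.le hb.1
      exact pow_le_pow_left₀ hpos hb.2 2
    have h2 := Finset.sum_le_sum h1
    rw [Finset.sum_const, hcard, nsmul_eq_mul] at h2
    push_cast at h2
    have h0 : (z 0)^2 ≤ q^2 * δ := by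
      have := hz0b
      have hs : (Real.sqrt δ)^2 = δ := Real.sq_sqrt hδ.le
      nlinarith [this.1, this.2, sq_nonneg (q * Real.sqrt δ)]
    nlinarith
  have hSpos : 0 < Q2 := by nlinarith [hSlow]
  have hnorm : ‖z‖ = Real.sqrt Q2 := by
    rw [EuclideanSpace.norm_eq, hQ2]
    congr 1
    refine Finset.sum_congr rfl fun i _ => ?_
    rw [Real.norm_eq_abs, sq_abs]
  have hnormpos : 0 < ‖z‖ := by rw [hnorm]; exact Real.sqrt_pos.2 hSpos
  have hnormsq : ‖z‖^2 = Q2 := by rw [hnorm]; exact Real.sq_sqrt hSpos.le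
  have ha2u : a^2 ≤ 1 := by nlinarith
  have hSlt1 : Q2 < 1 := by
    have hq34 : q^2 ≤ (3*a/4)^2 := by
      apply pow_le_pow_left₀ hqpos.le hw1.2.le
    have key : (3*a/4)^2 * (((k:ℝ)+1) * (1+δ/16)^2 + δ) < 1 := by
      have e1 : (3*a/4)^2 * (((k:ℝ)+1) * (1+δ/16)^2 + δ)
          = (9/16) * ((1-δ)*(1+δ/16)^2 + a^2*δ) := by
        linear_combination ((9:ℝ)/16*(1+δ/16)^2) * ha2'
      rw [e1]
      have h2 : a^2*δ ≤ 1*δ := mul_le_mul_of_nonneg_right ha2u hδ.le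
      nlinarith
    calc Q2 ≤ q^2 * (((k:ℝ)+1) * (1+δ/16)^2 + δ) := hShigh
    _ ≤ (3*a/4)^2 * (((k:ℝ)+1) * (1+δ/16)^2 + δ) := by
        apply mul_le_mul_of_nonneg_right hq34 (by positivity)
    _ < 1 := key
  have hnlt1 : ‖z‖ < 1 := by
    rw [hnorm]
    calc Real.sqrt Q2 < Real.sqrt 1 := Real.sqrt_lt_sqrt hSpos.le hSlt1
    _ = 1 := Real.sqrt_one
  -- the normalized point is in the band
  have hycone : ∀ i : Fin (k+2), (i:ℕ) ≠ 0 →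
      a*(1-δ) * ‖z‖ ≤ z i ∧ z i ≤ a*(1+δ) * ‖z‖ := by
    intro i hi
    obtain ⟨hb1, hb2⟩ := hzc i hi
    constructor
    · -- lower bound
      have key : (a*(1-δ))^2 * Q2 ≤ q^2 := by
        have h1 : (a*(1-δ))^2 * Q2 ≤ (a*(1-δ))^2 * (q^2 * (((k:ℝ)+1) * (1+δ/16)^2 + δ)) := by
          apply mul_le_mul_of_nonneg_left hShigh (by positivity)
        refine h1.trans ?_
        have e : (a*(1-δ))^2 * (q^2 * (((k:ℝ)+1) * (1+δ/16)^2 + δ))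
            = q^2 * ((1-δ)^2 * ((1-δ)*(1+δ/16)^2 + a^2*δ)) := by
          linear_combination ((1-δ)^2*q^2*(1+δ/16)^2) * ha2'
        rw [e]
        have h2 : a^2*δ ≤ δ := by nlinarith [ha2u]
        have h3 : (1-δ)^2*((1-δ)*(1+δ/16)^2 + a^2*δ) ≤ (1-δ)^2*((1-δ)*(1+δ/16)^2 + δ) :=
          mul_le_mul_of_nonneg_left (by linarith) (sq_nonneg (1-δ))
        have h4 : (1-δ)^2*((1-δ)*(1+δ/16)^2 + δ) ≤ 1 := by
          nlinarith [he2, he3, pow_nonneg hδ.le 4, pow_nonneg hδ.le 5]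
        nlinarith [sq_nonneg q]
      have hLHS : a*(1-δ) * ‖z‖ ≤ q := by
        refine le_of_pow_le_pow_left₀ (n := 2) two_ne_zero hqpos.le ?_
        rw [mul_pow, hnormsq]
        exact key
      linarith
    · -- upper bound
      have hzlow : q * Real.sqrt ((k:ℝ)+1) ≤ ‖z‖ := by
        rw [hnorm]
        have : Real.sqrt (((k:ℝ)+1) * q^2) ≤ Real.sqrt Q2 := Real.sqrt_le_sqrt hSlow
        rwa [Real.sqrt_mul (by positivity), Real.sqrt_sq hqpos.le, mul_comm] at this
      have hu : (0:ℝ) ≤ a * Real.sqrt ((k:ℝ)+1) := by positivity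
      have hu2 : (a * Real.sqrt ((k:ℝ)+1))^2 = 1-δ := by
        rw [mul_pow, Real.sq_sqrt (by positivity)]; exact ha2'
      have hkey : 1 + δ/16 ≤ (1+δ) * (a * Real.sqrt ((k:ℝ)+1)) := by
        refine le_of_pow_le_pow_left₀ (n := 2) two_ne_zero (by positivity) ?_
        rw [mul_pow, hu2]
        nlinarith [he2, he3]
      calc z i ≤ q * (1+δ/16) := hb2
      _ ≤ q * ((1+δ) * (a * Real.sqrt ((k:ℝ)+1))) := by
          apply mul_le_mul_of_nonneg_left hkey hqpos.le
      _ = a*(1+δ) * (q * Real.sqrt ((k:ℝ)+1)) := by ring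
      _ ≤ a*(1+δ) * ‖z‖ := by
          apply mul_le_mul_of_nonneg_left hzlow (by positivity)
  -- assemble the membership
  have hysph : ‖z‖⁻¹ • z ∈ Metric.sphere (0 : EuclideanSpace ℝ (Fin (k+2))) 1 := by
    rw [mem_sphere_iff_norm, sub_zero, norm_smul, norm_inv, norm_norm]
    exact inv_mul_cancel₀ hnormpos.ne'
  refine Set.mem_smul.2 ⟨‖z‖, ⟨hnormpos, hnlt1⟩, ‖z‖⁻¹ • z,
    ⟨⟨‖z‖⁻¹ • z, hysph⟩, fun i hi => ?_, rfl⟩, smul_inv_smul₀ hnormpos.ne' z⟩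
  have hcoord : ((⟨‖z‖⁻¹ • z, hysph⟩ : Metric.sphere (0 : EuclideanSpace ℝ (Fin (k+2))) 1) :
      EuclideanSpace ℝ (Fin (k+2))) i = z i / ‖z‖ := by
    show (‖z‖⁻¹ • z) i = _
    rw [PiLp.smul_apply, smul_eq_mul, inv_mul_eq_div]
  obtain ⟨hc1, hc2⟩ := hycone i hi
  rw [Set.mem_Icc, hcoord]
  constructor
  · rw [le_div_iff₀ hnormpos]; exact hc1
  · rw [div_le_iff₀ hnormpos]; exact hc2



lemma volume_box {n : ℕ} (I : Fin n → Set ℝ) (hI : ∀ i, MeasurableSet (I i)) :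
    volume {z : EuclideanSpace ℝ (Fin n) | ∀ i, z i ∈ I i} = ∏ i, volume (I i) := by
  have h := (EuclideanSpace.volume_preserving_symm_measurableEquiv_toLp (Fin n)).measure_preimage
    (MeasurableSet.univ_pi hI).nullMeasurableSet
  rw [← volume_pi_pi I, ← h]
  congr 1
  ext z
  simp [MeasurableEquiv.toLp, Set.mem_univ_pi]
  exact Iff.rfl

lemma Ibox_measurable (k : ℕ) (a δ : ℝ) (i : Fin (k+2)) : MeasurableSet (Ibox k a δ i) := by
  unfold Ibox; split_ifs <;> exact measurableSet_Ioo

lemma vol_Ibox (k : ℕ) {a δ : ℝ} :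
    volume {w : EuclideanSpace ℝ (Fin (k+2)) | ∀ i, w i ∈ Ibox k a δ i}
      = ENNReal.ofReal ((a/2) * Real.sqrt δ) *
        (ENNReal.ofReal (a/4) * ENNReal.ofReal (a*δ/32) ^ k) := by
  rw [volume_box _ (Ibox_measurable k a δ)]
  rw [Fin.prod_univ_succ, Fin.prod_univ_succ]
  have h0 : Ibox k a δ 0 = Ioo 0 ((a/2) * Real.sqrt δ) := by
    rw [Ibox, if_pos (Fin.val_zero _)]
  have h1 : Ibox k a δ (Fin.succ 0) = Ioo (a/2) (3*a/4) := by
    have hv : ((Fin.succ (0 : Fin (k+1)) : Fin (k+2)) : ℕ) = 1 := by simp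
    rw [Ibox, hv]; norm_num
  have h2 : ∀ i : Fin k, Ibox k a δ (Fin.succ (Fin.succ i)) = Ioo 0 (a*δ/32) := by
    intro i
    have hv : ((Fin.succ (Fin.succ i) : Fin (k+2)) : ℕ) = (i:ℕ) + 2 := by simp
    rw [Ibox, hv, if_neg (by omega), if_neg (by omega)]
  rw [h0, h1]
  rw [Finset.prod_congr rfl (fun i _ => by rw [h2 i])]
  rw [Finset.prod_const, Finset.card_univ, Fintype.card_fin]
  rw [Real.volume_Ioo, Real.volume_Ioo, Real.volume_Ioo, sub_zero, sub_zero]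
  congr 2
  ring


end auxiliaryLemmas

set_option maxHeartbeats 2000000 in
/-- with `f₁ = χ_{[-10√m,10√m]}` and `f₂ = ⋯ = f_m = χ_{[-δ,δ]}`, one has
`S^m(f₁,…,f_m)(x) ≳ δ^{m-3/2}` for `1/2 ≤ x ≤ 1`. -/
theorem concentrated_lower_bound_b (m : ℕ) (hm : 2 ≤ m) :
    ∃ c : ℝ, 0 < c ∧ ∀ δ : ℝ, 0 < δ → δ ≤ 1 / 2 →
      ∀ x : ℝ, 1 / 2 ≤ x → x ≤ 1 →
        ENNReal.ofReal (c * δ ^ ((m : ℝ) - 3 / 2)) ≤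
          Sm m (fun i =>
            if (i : ℕ) = 0 then
              Set.indicator (Set.Icc (-(10 * Real.sqrt m)) (10 * Real.sqrt m)) 1
            else Set.indicator (Set.Icc (-δ) δ) 1) x := by
  classical
  obtain ⟨k, rfl⟩ : ∃ k, m = k + 2 := ⟨m - 2, by omega⟩
  have hk0 : (0:ℝ) ≤ (k:ℝ) := Nat.cast_nonneg k
  set B₀ : ℝ≥0∞ :=
    (volume : Measure (EuclideanSpace ℝ (Fin (k+2)))).toSphere Set.univ with hB₀
  have hB₀top : B₀ ≠ ⊤ := measure_ne_top _ _
  set M : ℝ := max B₀.toReal 1 with hM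
  have hM1 : (1:ℝ) ≤ M := le_max_right _ _
  have hMpos : (0:ℝ) < M := lt_of_lt_of_le one_pos hM1
  set a₀ : ℝ := Real.sqrt (1 / (2 * ((k:ℝ)+2))) with ha₀
  have ha₀pos : 0 < a₀ := Real.sqrt_pos.2 (by positivity)
  have ha₀sq : a₀^2 = 1 / (2 * ((k:ℝ)+2)) := Real.sq_sqrt (by positivity)
  set c₀ : ℝ := a₀ ^ (k+2) / (8 * 32 ^ k) with hc₀
  have hc₀pos : 0 < c₀ := by positivity
  refine ⟨c₀ / M, by positivity, ?_⟩
  intro δ hδ hδ2 x hx1 hx2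
  have hδ1 : δ ≤ 1 := by linarith
  have hxpos : 0 < x := by linarith
  set a : ℝ := Real.sqrt ((1-δ)/((k:ℝ)+1)) with ha
  have hapos : 0 < a := Real.sqrt_pos.2 (div_pos (by linarith) (by positivity))
  have ha2 : a^2 = (1-δ)/((k:ℝ)+1) :=
    Real.sq_sqrt (le_of_lt (div_pos (by linarith) (by positivity)))
  clear_value a
  have ha2' : a^2 * ((k:ℝ)+1) = 1-δ := by
    rw [ha2]; field_simp
  have ha1 : a ≤ 1 := by
    refine le_of_pow_le_pow_left₀ (n := 2) two_ne_zero one_pos.le ?_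
    rw [one_pow]; nlinarith [ha2', sq_nonneg a]
  have ha₀a : a₀ ≤ a := by
    refine le_of_pow_le_pow_left₀ (n := 2) two_ne_zero hapos.le ?_
    rw [ha₀sq, ha2, div_le_div_iff₀ (by positivity) (by positivity)]
    nlinarith
  set t : ℝ := x / a with htdef
  have htpos : 0 < t := by rw [htdef]; positivity
  have hat : t * a = x := by rw [htdef]; field_simp
  clear_value t
  have hta : t ≤ 2 * Real.sqrt ((k:ℝ)+2) := by
    have hs2 : Real.sqrt ((k:ℝ)+2) ^ 2 = (k:ℝ)+2 := Real.sq_sqrt (by positivity)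
    have h1 : t ≤ 1 / a := by
      rw [le_div_iff₀ hapos, hat]; exact hx2
    refine h1.trans ?_
    rw [div_le_iff₀ hapos]
    refine le_of_pow_le_pow_left₀ (n := 2) two_ne_zero (by positivity) ?_
    rw [one_pow, mul_pow, mul_pow, hs2]
    nlinarith [ha2', sq_nonneg a]
  have hs2one : (1:ℝ) ≤ Real.sqrt ((k:ℝ)+2) := by
    rw [show (1:ℝ) = Real.sqrt 1 by simp]
    exact Real.sqrt_le_sqrt (by linarith)
  -- the integrand is 1 on the band
  set F : Fin (k+2) → ℝ → ℝ := (fun i =>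
    if (i : ℕ) = 0 then
      Set.indicator (Set.Icc (-(10 * Real.sqrt ((k+2:ℕ):ℝ))) (10 * Real.sqrt ((k+2:ℕ):ℝ))) 1
    else Set.indicator (Set.Icc (-δ) δ) 1) with hF
  have hpt : ∀ y ∈ Aband k a δ, (1:ℝ≥0∞) ≤ ∏ i, ENNReal.ofReal
      |F i (x - t * (y : EuclideanSpace ℝ (Fin (k+2))) i)| := by
    intro y hy
    refine le_of_eq (Finset.prod_eq_one fun i _ => ?_).symm
    by_cases hi : (i:ℕ) = 0
    · simp only [hF]
      have hnorm : ‖(y : EuclideanSpace ℝ (Fin (k+2)))‖ = 1 := by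
        have h2 := y.2
        rwa [mem_sphere_iff_norm, sub_zero] at h2
      have habs : |(y : EuclideanSpace ℝ (Fin (k+2))) i| ≤ 1 :=
        (abs_coord_le' _ i).trans (le_of_eq hnorm)
      rw [abs_le] at habs
      have hmem : x - t * (y : EuclideanSpace ℝ (Fin (k+2))) i
          ∈ Icc (-(10 * Real.sqrt ((k+2:ℕ):ℝ))) (10 * Real.sqrt ((k+2:ℕ):ℝ)) := by
        have hcast : ((k+2:ℕ):ℝ) = (k:ℝ)+2 := by push_cast; ring
        rw [hcast, Set.mem_Icc]
        constructor
        · nlinarith [mul_le_mul_of_nonneg_left habs.2 htpos.le, hta, hs2one]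
        · nlinarith [mul_le_mul_of_nonneg_left habs.1 htpos.le, hta, hs2one]
      simp only [hi, if_pos]
      rw [Set.indicator_of_mem hmem]
      simp
    · simp only [hF]
      have h1 := (hy i hi).1
      have h2 := (hy i hi).2
      have e1 : t * (a*(1-δ)) = x*(1-δ) := by rw [← mul_assoc, hat]
      have e2 : t * (a*(1+δ)) = x*(1+δ) := by rw [← mul_assoc, hat]
      have hmem : x - t * (y : EuclideanSpace ℝ (Fin (k+2))) i ∈ Icc (-δ) δ := by
        rw [Set.mem_Icc]
        constructor
        · nlinarith [mul_le_mul_of_nonneg_left h2 htpos.le]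
        · nlinarith [mul_le_mul_of_nonneg_left h1 htpos.le]
      simp only [hi, if_false]
      rw [Set.indicator_of_mem hmem]
      simp
  -- step 1 : maximal function dominates the band measure
  have hstep1 : sphMeasure (k+2) (Aband k a δ) ≤ Sm (k+2) F x := by
    have h1 : sphMeasure (k+2) (Aband k a δ) ≤ sphAvg (k+2) F t x := by
      calc sphMeasure (k+2) (Aband k a δ)
          = ∫⁻ _ in Aband k a δ, 1 ∂(sphMeasure (k+2)) := (setLIntegral_one _).symm
      _ ≤ ∫⁻ y in Aband k a δ, ∏ i, ENNReal.ofReal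
            |F i (x - t * (y : EuclideanSpace ℝ (Fin (k+2))) i)| ∂(sphMeasure (k+2)) :=
          setLIntegral_mono' (Aband_measurable k a δ) hpt
      _ ≤ _ := setLIntegral_le_lintegral _ _
    exact h1.trans (le_iSup₂ (f := fun (t : ℝ) (_ : 0 < t) => sphAvg (k+2) F t x) t htpos)
  -- step 2 : band measure lower bound via the sheared box
  have hbandlow : ENNReal.ofReal ((a/2) * Real.sqrt δ) *
        (ENNReal.ofReal (a/4) * ENNReal.ofReal (a*δ/32) ^ k) ≤
      (volume : Measure (EuclideanSpace ℝ (Fin (k+2)))).toSphere (Aband k a δ) := by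
    rw [Measure.toSphere_apply' _ (Aband_measurable k a δ)]
    calc ENNReal.ofReal ((a/2) * Real.sqrt δ) *
          (ENNReal.ofReal (a/4) * ENNReal.ofReal (a*δ/32) ^ k)
        = volume {w : EuclideanSpace ℝ (Fin (k+2)) | ∀ i, w i ∈ Ibox k a δ i} :=
          (vol_Ibox k).symm
    _ = volume ((⇑(shear k)) '' {w | ∀ i, w i ∈ Ibox k a δ i}) := by
        rw [Measure.addHaar_image_linearMap, shear_det]
        norm_num
    _ ≤ volume (Ioo (0:ℝ) 1 • (Subtype.val '' Aband k a δ)) :=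
        measure_mono (cone_incl k hδ hδ2 hapos ha2' ha1)
    _ ≤ (Module.finrank ℝ (EuclideanSpace ℝ (Fin (k+2))) : ℝ≥0∞) *
          volume (Ioo (0:ℝ) 1 • (Subtype.val '' Aband k a δ)) := by
        refine le_mul_of_one_le_left zero_le' ?_
        rw [finrank_euclideanSpace_fin]
        exact_mod_cast Nat.one_le_iff_ne_zero.2 (by omega)
  -- step 3 : numeric lower bound for the box volume
  have hreal : c₀ * δ ^ (((k+2:ℕ):ℝ) - 3/2) ≤ (a/2) * Real.sqrt δ * ((a/4) * (a*δ/32)^k) := by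
    have hexp : ((k+2:ℕ):ℝ) - 3/2 = (k:ℝ) + 1/2 := by push_cast; ring
    have hrpow : δ ^ (((k+2:ℕ):ℝ) - 3/2) = δ^k * Real.sqrt δ := by
      rw [hexp, Real.rpow_add hδ, Real.rpow_natCast, Real.sqrt_eq_rpow]
    rw [hrpow]
    have hRHS : (a/2) * Real.sqrt δ * ((a/4) * (a*δ/32)^k)
        = (a^(k+2) / (8 * 32^k)) * (δ^k * Real.sqrt δ) := by
      rw [div_pow, mul_pow]
      field_simp
      ring
    rw [hRHS, hc₀]
    have hpow : a₀^(k+2) ≤ a^(k+2) := pow_le_pow_left₀ ha₀pos.le ha₀a _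
    apply mul_le_mul_of_nonneg_right _ (by positivity)
    apply div_le_div_of_nonneg_right hpow (by positivity)
  -- assemble
  have hofReal : ENNReal.ofReal (c₀ * δ ^ (((k+2:ℕ):ℝ) - 3/2)) ≤
      (volume : Measure (EuclideanSpace ℝ (Fin (k+2)))).toSphere (Aband k a δ) := by
    refine le_trans ?_ hbandlow
    calc ENNReal.ofReal (c₀ * δ ^ (((k+2:ℕ):ℝ) - 3/2))
        ≤ ENNReal.ofReal ((a/2) * Real.sqrt δ * ((a/4) * (a*δ/32)^k)) :=
          ENNReal.ofReal_le_ofReal hreal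
    _ = ENNReal.ofReal ((a/2) * Real.sqrt δ) *
          (ENNReal.ofReal (a/4) * ENNReal.ofReal (a*δ/32)^k) := by
        rw [← ENNReal.ofReal_pow (by positivity), ← ENNReal.ofReal_mul (by positivity),
          ← ENNReal.ofReal_mul (by positivity)]
  have hMB : B₀ ≤ ENNReal.ofReal M := by
    conv_lhs => rw [← ENNReal.ofReal_toReal hB₀top]
    exact ENNReal.ofReal_le_ofReal (le_max_left _ _)
  have hfinal : ENNReal.ofReal (c₀/M * δ ^ (((k+2:ℕ):ℝ) - 3/2)) ≤
      sphMeasure (k+2) (Aband k a δ) := by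
    have hsm : sphMeasure (k+2) (Aband k a δ) = B₀⁻¹ *
        ((volume : Measure (EuclideanSpace ℝ (Fin (k+2)))).toSphere (Aband k a δ)) := by
      rw [sphMeasure, Measure.smul_apply, smul_eq_mul]
    rw [hsm]
    calc ENNReal.ofReal (c₀/M * δ ^ (((k+2:ℕ):ℝ) - 3/2))
        = (ENNReal.ofReal M)⁻¹ * ENNReal.ofReal (c₀ * δ ^ (((k+2:ℕ):ℝ) - 3/2)) := by
          rw [← ENNReal.ofReal_inv_of_pos hMpos, ← ENNReal.ofReal_mul (by positivity)]
          congr 1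
          field_simp
    _ ≤ B₀⁻¹ * ((volume : Measure (EuclideanSpace ℝ (Fin (k+2)))).toSphere (Aband k a δ)) :=
          mul_le_mul' (ENNReal.inv_le_inv.2 hMB) hofReal
  exact hfinal.trans hstep1
end
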